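/- arXiv:2201.01640 — 7 statements merged into one kernel-verified Lean document; each statement's English description precedes it below -/
import Mathlib

section
/- Let m ≥ n ≥ 1 and let K_{m,n} denote the complete bipartite graph with partite sets of sizes m and n. Then mr_+^R(K_{m,n}) = mr_+^C(K_{m,n}) = m. Consequently, K_{m,n} is a frame graph in a real (or complex) inner product space of dimension d if and only if m ≤ d ≤ m + n. -/
open scoped ComplexOrder

/-- The minimum positive semidefinite rank of a simple graph `G` over the field `𝕜`
(`𝕜 = ℝ` gives `mr₊^ℝ`, `𝕜 = ℂ` gives `mr₊^ℂ`): the minimum rank over all positive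
semidefinite Hermitian matrices whose off-diagonal zero/nonzero pattern matches `G`. -/
noncomputable def mrPlus (𝕜 : Type) [RCLike 𝕜] {V : Type} [Fintype V] [DecidableEq V]
    (G : SimpleGraph V) : ℕ :=
  sInf {r : ℕ | ∃ A : Matrix V V 𝕜, A.PosSemidef ∧
    (∀ i j : V, i ≠ j → (A i j ≠ 0 ↔ G.Adj i j)) ∧ A.rank = r}

/-- `G` is a frame graph in the `d`-dimensional inner product space over `𝕜`:
there is a spanning family (frame) `f` indexed by the vertices such that distinct
vertices are adjacent iff the corresponding vectors are non-orthogonal. -/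
def IsFrameGraphIn (𝕜 : Type) [RCLike 𝕜] {V : Type} (G : SimpleGraph V) (d : ℕ) : Prop :=
  ∃ f : V → EuclideanSpace 𝕜 (Fin d),
    Submodule.span 𝕜 (Set.range f) = ⊤ ∧
    ∀ i j : V, i ≠ j → ((inner 𝕜 (f i) (f j) : 𝕜) ≠ 0 ↔ G.Adj i j)

/-- The strong product of two simple graphs. -/
def strongProd {α β : Type} (G : SimpleGraph α) (H : SimpleGraph β) :
    SimpleGraph (α × β) where
  Adj x y := (x.1 = y.1 ∧ H.Adj x.2 y.2) ∨ (x.2 = y.2 ∧ G.Adj x.1 y.1) ∨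
    (G.Adj x.1 y.1 ∧ H.Adj x.2 y.2)
  symm := by
    constructor
    rintro ⟨a, b⟩ ⟨c, d⟩ (⟨h1, h2⟩ | ⟨h1, h2⟩ | ⟨h1, h2⟩)
    · exact Or.inl ⟨h1.symm, h2.symm⟩
    · exact Or.inr (Or.inl ⟨h1.symm, h2.symm⟩)
    · exact Or.inr (Or.inr ⟨h1.symm, h2.symm⟩)
  loopless := by
    constructor
    rintro ⟨a, b⟩ (⟨_, h⟩ | ⟨_, h⟩ | ⟨h, _⟩)
    · exact H.loopless.irrefl b h
    · exact G.loopless.irrefl a h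
    · exact G.loopless.irrefl a h

/-- The join `G ∨ H` of two graphs with disjoint vertex sets. -/
def joinGraph {α β : Type} (G : SimpleGraph α) (H : SimpleGraph β) :
    SimpleGraph (α ⊕ β) where
  Adj x y := match x, y with
    | Sum.inl a, Sum.inl b => G.Adj a b
    | Sum.inr a, Sum.inr b => H.Adj a b
    | Sum.inl _, Sum.inr _ => True
    | Sum.inr _, Sum.inl _ => True
  symm := by
    constructor
    rintro (a | a) (b | b) h
    · exact h.symm
    · trivial
    · trivial
    · exact h.symm
  loopless := by
    constructor
    rintro (a | a) h
    · exact G.loopless.irrefl a h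
    · exact H.loopless.irrefl a h

/-- The vertex-sum `G · H` of `G` and `H`, obtained by identifying the vertex `a` of `G`
with the vertex `b` of `H` (and no other vertices or edges shared). -/
def vertexSum {α β : Type} (G : SimpleGraph α) (H : SimpleGraph β) (a : α) (b : β) :
    SimpleGraph (α ⊕ {y : β // y ≠ b}) where
  Adj x y := match x, y with
    | Sum.inl u, Sum.inl u' => G.Adj u u'
    | Sum.inr v, Sum.inr v' => H.Adj v.1 v'.1
    | Sum.inl u, Sum.inr v => u = a ∧ H.Adj b v.1
    | Sum.inr v, Sum.inl u => u = a ∧ H.Adj b v.1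
  symm := by
    constructor
    rintro (u | v) (u' | v') h
    · exact h.symm
    · exact h
    · exact h
    · exact h.symm
  loopless := by
    constructor
    rintro (u | v) h
    · exact G.loopless.irrefl u h
    · exact H.loopless.irrefl v.1 h

/-- The corona product `G ∘ H`: one copy of `G`, one copy of `H` for each vertex of `G`,
with every vertex of the `i`-th copy of `H` joined to the `i`-th vertex of `G`. -/
def corona {α β : Type} (G : SimpleGraph α) (H : SimpleGraph β) :
    SimpleGraph (α ⊕ α × β) where
  Adj x y := match x, y with
    | Sum.inl u, Sum.inl u' => G.Adj u u'
    | Sum.inr p, Sum.inr q => p.1 = q.1 ∧ H.Adj p.2 q.2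
    | Sum.inl u, Sum.inr p => u = p.1
    | Sum.inr p, Sum.inl u => u = p.1
  symm := by
    constructor
    rintro (u | p) (u' | q) h
    · exact h.symm
    · exact h
    · exact h
    · exact ⟨h.1.symm, h.2.symm⟩
  loopless := by
    constructor
    rintro (u | p) h
    · exact G.loopless.irrefl u h
    · exact H.loopless.irrefl p.2 h.2

/-- `v : Fin m → V` is an OS-vertex set of `G`: the vertices are distinct, and for each `k`
there is `w` adjacent to `v k`, different from all `v l` with `l ≤ k`, and non-adjacent to
every `v l` (`l < k`) lying in the connected component of `v k` in the subgraph induced by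
`{v 0, …, v k}`. -/
def IsOSSet {V : Type} (G : SimpleGraph V) {m : ℕ} (v : Fin m → V) : Prop :=
  Function.Injective v ∧
  ∀ k : Fin m, ∃ w : V,
    G.Adj (v k) w ∧
    (∀ l : Fin m, l ≤ k → w ≠ v l) ∧
    ∀ l : Fin m, (hl : l < k) →
      (G.induce {x : V | ∃ l' : Fin m, l' ≤ k ∧ x = v l'}).Reachable
        ⟨v l, ⟨l, le_of_lt hl, rfl⟩⟩ ⟨v k, ⟨k, le_refl k, rfl⟩⟩ →
      ¬ G.Adj w (v l)

/-- The OS-number of `G`: the maximum cardinality of an OS-vertex set of `G`. -/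
noncomputable def OSNumber {V : Type} (G : SimpleGraph V) : ℕ :=
  sSup {m : ℕ | ∃ v : Fin m → V, IsOSSet G v}
section AuxLemmas

open Finset Module Matrix

lemma cbg_adj {V W : Type} (x y : V ⊕ W) :
    (completeBipartiteGraph V W).Adj x y ↔
      (x.isLeft ∧ y.isRight ∨ x.isRight ∧ y.isLeft) := Iff.rfl

/-- For `n ≤ m` there are `n` pairwise orthogonal vectors in `ℝ^m` with all
coordinates nonzero. -/
lemma exists_orth_nowhere_zero (m n : ℕ) (hmn : n ≤ m) :
    ∃ a : Fin n → Fin m → ℝ, (∀ j i, a j i ≠ 0) ∧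
      ∀ j k : Fin n, j ≠ k → ∑ i, a j i * a k i = 0 := by
  by_cases hm : m = 2
  · subst hm
    refine ⟨fun j i => if (j : ℕ) = 0 then 1 else if (i : ℕ) = 0 then 1 else -1, ?_, ?_⟩
    · intro j i; dsimp only; split_ifs <;> norm_num
    · intro j k hjk
      have hj2 : (j : ℕ) < 2 := lt_of_lt_of_le j.2 hmn
      have hk2 : (k : ℕ) < 2 := lt_of_lt_of_le k.2 hmn
      have hne : (j : ℕ) ≠ (k : ℕ) := fun h => hjk (Fin.ext h)
      rcases (by omega : (j : ℕ) = 0 ∧ (k : ℕ) = 1 ∨ (j : ℕ) = 1 ∧ (k : ℕ) = 0) with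
        ⟨h1, h2⟩ | ⟨h1, h2⟩ <;>
      · simp [Fin.sum_univ_two, h1, h2]
  · refine ⟨fun j i => if i = Fin.castLE hmn j then (m : ℝ) - 2 else -2, ?_, ?_⟩
    · intro j i; dsimp only; split_ifs with h
      · have h2 : (m : ℝ) ≠ 2 := by exact_mod_cast hm
        exact sub_ne_zero.mpr h2
      · norm_num
    · intro j k hjk
      have hjk' : Fin.castLE hmn j ≠ Fin.castLE hmn k :=
        fun h => hjk (Fin.castLE_injective hmn h)
      have key : ∀ i : Fin m,
          (if i = Fin.castLE hmn j then (m : ℝ) - 2 else -2) *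
            (if i = Fin.castLE hmn k then (m : ℝ) - 2 else -2)
          = 4 + ((if i = Fin.castLE hmn j then -2 * (m : ℝ) else 0)
               + (if i = Fin.castLE hmn k then -2 * (m : ℝ) else 0)) := by
        intro i
        rcases eq_or_ne i (Fin.castLE hmn j) with h1 | h1 <;>
          rcases eq_or_ne i (Fin.castLE hmn k) with h2 | h2
        · exact absurd (h1.symm.trans h2) hjk'
        · subst h1; rw [if_pos rfl, if_neg h2, if_pos rfl, if_neg h2]; ring
        · subst h2; rw [if_neg h1, if_pos rfl, if_neg h1, if_pos rfl]; ring
        · rw [if_neg h1, if_neg h2, if_neg h1, if_neg h2]; ring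
      rw [Finset.sum_congr rfl fun i _ => key i, Finset.sum_add_distrib,
        Finset.sum_add_distrib, Finset.sum_const, Finset.sum_ite_eq', Finset.sum_ite_eq']
      simp [Finset.card_univ]
      ring

/-- Pairwise-orthogonal (w.r.t. the standard sesquilinear form) nonzero vectors are
linearly independent. -/
lemma linearIndependent_of_orth' {𝕜 : Type} [RCLike 𝕜] {ι : Type} [Fintype ι] {r : ℕ}
    {v : Fin r → ι → 𝕜} (hnz : ∀ i, v i ≠ 0)
    (horth : ∀ i j : Fin r, i ≠ j → ∑ t, (starRingEnd 𝕜) (v i t) * v j t = 0) :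
    LinearIndependent 𝕜 v := by
  rw [linearIndependent_iff']
  intro s g hsum i hi
  have hS : ∑ t, (starRingEnd 𝕜) (v i t) * v i t ≠ 0 := by
    have hcast : ∑ t, (starRingEnd 𝕜) (v i t) * v i t
        = ((∑ t, ‖v i t‖ ^ 2 : ℝ) : 𝕜) := by
      push_cast
      exact Finset.sum_congr rfl fun t _ => RCLike.conj_mul (v i t)
    rw [hcast, Ne, RCLike.ofReal_eq_zero]
    intro h
    apply hnz i
    funext t
    have ht := (Finset.sum_eq_zero_iff_of_nonneg
      (fun t _ => sq_nonneg ‖v i t‖)).mp h t (Finset.mem_univ t)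
    simpa using ht
  have h0 : ∑ t, (starRingEnd 𝕜) (v i t) * (∑ j ∈ s, g j • v j) t = 0 := by
    rw [hsum]; simp
  have h1 : ∑ t, (starRingEnd 𝕜) (v i t) * (∑ j ∈ s, g j • v j) t
      = ∑ j ∈ s, g j * ∑ t, (starRingEnd 𝕜) (v i t) * v j t := by
    simp only [Finset.sum_apply, Pi.smul_apply, smul_eq_mul, Finset.mul_sum]
    rw [Finset.sum_comm]
    exact Finset.sum_congr rfl fun j _ => Finset.sum_congr rfl fun t _ => by ring
  rw [h1, Finset.sum_eq_single i
      (fun j _ hj => by rw [horth i j (Ne.symm hj), mul_zero])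
      (fun h => absurd hi h)] at h0
  exact (mul_eq_zero.mp h0).resolve_right hS

lemma le_rank_of_cols {R : Type} [Field R] {ι κ : Type} [Fintype ι] [Fintype κ]
    (B : Matrix ι κ R) {r : ℕ} (g : Fin r → κ)
    (h : LinearIndependent R fun i => Bᵀ (g i)) : r ≤ B.rank := by
  classical
  rw [Matrix.rank_eq_finrank_span_cols]
  have h1 : Submodule.span R (Set.range fun i => Bᵀ (g i))
      ≤ Submodule.span R (Set.range Bᵀ) :=
    Submodule.span_mono (Set.range_comp_subset_range g Bᵀ)
  calc r = Module.finrank R (Submodule.span R (Set.range fun i => Bᵀ (g i))) := by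
        rw [finrank_span_eq_card h, Fintype.card_fin]
    _ ≤ _ := Submodule.finrank_mono h1

lemma sum_dite_lt {M : Type} [AddCommMonoid M] {m d : ℕ} (hmd : m ≤ d) (c : Fin m → M) :
    ∑ t : Fin d, (if h : (t : ℕ) < m then c ⟨t, h⟩ else 0) = ∑ i : Fin m, c i := by
  classical
  have h1 : ∑ t : Fin d, (if h : (t : ℕ) < m then c ⟨t, h⟩ else 0)
      = ∑ t ∈ Finset.range d, (if h : t < m then c ⟨t, h⟩ else 0) :=
    Fin.sum_univ_eq_sum_range (fun t => if h : t < m then c ⟨t, h⟩ else 0) d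
  rw [h1, ← Finset.sum_subset (Finset.range_subset_range.mpr hmd)
      (fun t _ ht => dif_neg (by simpa using ht))]
  rw [← Fin.sum_univ_eq_sum_range (fun t => if h : t < m then c ⟨t, h⟩ else 0) m]
  exact Finset.sum_congr rfl fun i _ => by rw [dif_pos i.isLt]

lemma m_le_rank_of_pattern {𝕜 : Type} [RCLike 𝕜] {m n : ℕ} (hn : 1 ≤ n)
    {A : Matrix (Fin m ⊕ Fin n) (Fin m ⊕ Fin n) 𝕜} (hA : A.PosSemidef)
    (hpat : ∀ i j, i ≠ j → (A i j ≠ 0 ↔ (completeBipartiteGraph (Fin m) (Fin n)).Adj i j)) :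
    m ≤ A.rank := by
  obtain ⟨B, rfl⟩ : ∃ B : Matrix (Fin m ⊕ Fin n) (Fin m ⊕ Fin n) 𝕜, A = Bᴴ * B := by
    open scoped MatrixOrder in
    obtain ⟨X, hX, -, hXA⟩ :=
      CFC.exists_sqrt_of_isSelfAdjoint_of_quasispectrumRestricts hA.isHermitian
        (QuasispectrumRestricts.nnreal_of_nonneg hA.nonneg)
    exact ⟨X, by rw [← hXA, (show Xᴴ = X from hX)]⟩
  have hentry : ∀ x y, (Bᴴ * B) x y = ∑ t, (starRingEnd 𝕜) (B t x) * B t y := by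
    intro x y
    simp [Matrix.mul_apply, Matrix.conjTranspose_apply, RCLike.star_def]
  rw [Matrix.rank_conjTranspose_mul_self]
  refine le_rank_of_cols B Sum.inl (linearIndependent_of_orth' ?_ ?_)
  · intro i hvi
    have hadj : (Bᴴ * B) (Sum.inl i) (Sum.inr (⟨0, hn⟩ : Fin n)) ≠ 0 := by
      rw [hpat _ _ (by simp)]
      simp [cbg_adj]
    apply hadj
    rw [hentry]
    apply Finset.sum_eq_zero
    intro t _
    have hz : B t (Sum.inl i) = 0 := congrFun hvi t
    simp [hz]
  · intro i i' hii
    have h0 : ¬ (Bᴴ * B) (Sum.inl i) (Sum.inl i') ≠ 0 := by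
      rw [hpat _ _ (by simp [hii])]
      simp [cbg_adj]
    have h0' := not_not.mp h0
    rw [hentry] at h0'
    exact h0'

lemma exists_good_matrix (𝕜 : Type) [RCLike 𝕜] (m n : ℕ) (hn : 1 ≤ n) (hmn : n ≤ m) :
    ∃ A : Matrix (Fin m ⊕ Fin n) (Fin m ⊕ Fin n) 𝕜, A.PosSemidef ∧
      (∀ i j, i ≠ j → (A i j ≠ 0 ↔ (completeBipartiteGraph (Fin m) (Fin n)).Adj i j)) ∧
      A.rank = m := by
  classical
  obtain ⟨a, ha0, haorth⟩ := exists_orth_nowhere_zero m n hmn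
  set B : Matrix (Fin m) (Fin m ⊕ Fin n) 𝕜 :=
    Matrix.of fun t x => Sum.elim (fun i => if t = i then (1 : 𝕜) else 0)
      (fun j => ((a j t : ℝ) : 𝕜)) x with hB
  have hentry : ∀ x y, (Bᴴ * B) x y = ∑ t, (starRingEnd 𝕜) (B t x) * B t y := by
    intro x y
    simp [Matrix.mul_apply, Matrix.conjTranspose_apply, RCLike.star_def]
  refine ⟨Bᴴ * B, Matrix.posSemidef_conjTranspose_mul_self B, ?_, ?_⟩
  · rintro (i | j) (i' | j') hxy
    · have hii : i ≠ i' := fun h => hxy (by rw [h])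
      have hz : (Bᴴ * B) (Sum.inl i) (Sum.inl i') = 0 := by
        rw [hentry]
        apply Finset.sum_eq_zero
        intro t _
        rcases eq_or_ne t i with rfl | h
        · simp [hB, hii]
        · simp [hB, h]
      simp [hz, cbg_adj]
    · have hval : (Bᴴ * B) (Sum.inl i) (Sum.inr j') = ((a j' i : ℝ) : 𝕜) := by
        rw [hentry, Finset.sum_eq_single i
          (fun t _ ht => by simp [hB, ht])
          (fun h => absurd (Finset.mem_univ i) h)]
        simp [hB]
      simp [hval, cbg_adj, RCLike.ofReal_ne_zero, ha0 j' i]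
    · have hval : (Bᴴ * B) (Sum.inr j) (Sum.inl i') = ((a j i' : ℝ) : 𝕜) := by
        rw [hentry, Finset.sum_eq_single i'
          (fun t _ ht => by simp [hB, ht])
          (fun h => absurd (Finset.mem_univ i') h)]
        simp [hB, RCLike.conj_ofReal]
      simp [hval, cbg_adj, RCLike.ofReal_ne_zero, ha0 j i']
    · have hjj : j ≠ j' := fun h => hxy (by rw [h])
      have hval : (Bᴴ * B) (Sum.inr j) (Sum.inr j') = ((∑ t, a j t * a j' t : ℝ) : 𝕜) := by
        rw [hentry]
        push_cast
        exact Finset.sum_congr rfl fun t _ => by simp [hB, RCLike.conj_ofReal]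
      rw [haorth j j' hjj] at hval
      simp [hval, cbg_adj]
  · rw [Matrix.rank_conjTranspose_mul_self]
    refine le_antisymm (le_trans B.rank_le_card_height (le_of_eq (Fintype.card_fin m))) ?_
    refine le_rank_of_cols B Sum.inl (linearIndependent_of_orth' ?_ ?_)
    · intro i hvi
      have := congrFun hvi i
      simp [hB] at this
    · intro i i' hii
      apply Finset.sum_eq_zero
      intro t _
      rcases eq_or_ne t i with rfl | h
      · simp [hB, hii]
      · simp [hB, h]

lemma isFrameGraphIn_of_le {𝕜 : Type} [RCLike 𝕜] {m n d : ℕ} (hmn : n ≤ m)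
    (hmd : m ≤ d) (hd : d ≤ m + n) :
    IsFrameGraphIn 𝕜 (completeBipartiteGraph (Fin m) (Fin n)) d := by
  classical
  obtain ⟨a, ha0, haorth⟩ := exists_orth_nowhere_zero m n hmn
  set g0 : Fin n → Fin d → 𝕜 := fun j t =>
    if h : (t : ℕ) < m then ((a j ⟨t, h⟩ : ℝ) : 𝕜)
    else if (t : ℕ) = m + (j : ℕ) then 1 else 0 with hg0
  set f : (Fin m ⊕ Fin n) → EuclideanSpace 𝕜 (Fin d) :=
    Sum.elim (fun i => EuclideanSpace.single (Fin.castLE hmd i) 1)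
      (fun j => (WithLp.equiv 2 (Fin d → 𝕜)).symm (g0 j)) with hf
  have hg0lt : ∀ (j : Fin n) (i : Fin m), g0 j (Fin.castLE hmd i) = ((a j i : ℝ) : 𝕜) := by
    intro j i
    rw [hg0]
    simp only [Fin.coe_castLE]
    rw [dif_pos i.isLt]
  refine ⟨f, ?_, ?_⟩
  · rw [eq_top_iff, ← (EuclideanSpace.basisFun (Fin d) 𝕜).toBasis.span_eq,
      Submodule.span_le]
    rintro x ⟨t, rfl⟩
    rw [OrthonormalBasis.coe_toBasis, EuclideanSpace.basisFun_apply]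
    by_cases ht : (t : ℕ) < m
    · apply Submodule.subset_span
      refine ⟨Sum.inl ⟨(t : ℕ), ht⟩, ?_⟩
      rw [hf]
      simp only [Sum.elim_inl]
      congr 1
    · have htd := t.isLt
      set j : Fin n := ⟨(t : ℕ) - m, by omega⟩ with hj
      have heq : EuclideanSpace.single t (1 : 𝕜)
          = f (Sum.inr j) - ∑ i : Fin m, ((a j i : ℝ) : 𝕜) • f (Sum.inl i) := by
        apply (WithLp.linearEquiv 2 𝕜 (Fin d → 𝕜)).injective
        rw [map_sub, map_sum]
        funext s
        simp only [WithLp.coe_linearEquiv, WithLp.ofLp_smul, hf, Sum.elim_inl,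
          Sum.elim_inr, PiLp.ofLp_single, WithLp.equiv_symm_apply, WithLp.ofLp_toLp, Pi.sub_apply,
          Finset.sum_apply, Pi.smul_apply, smul_eq_mul]
        by_cases hs : (s : ℕ) < m
        · have h1 : (Pi.single t (1 : 𝕜) : Fin d → 𝕜) s = 0 := by
            rw [Pi.single_apply, if_neg]
            intro h; rw [h] at hs; omega
          have h2 : g0 j s = ((a j ⟨(s : ℕ), hs⟩ : ℝ) : 𝕜) := by
            rw [hg0]; exact dif_pos hs
          have h3 : ∑ i : Fin m, ((a j i : ℝ) : 𝕜) *
              (Pi.single (Fin.castLE hmd i) (1 : 𝕜) : Fin d → 𝕜) s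
              = ((a j ⟨(s : ℕ), hs⟩ : ℝ) : 𝕜) := by
            rw [Finset.sum_eq_single (⟨(s : ℕ), hs⟩ : Fin m)]
            · simp only [Pi.single_apply]
              rw [if_pos (show s = Fin.castLE hmd ⟨(s : ℕ), hs⟩ from Fin.ext rfl), mul_one]
            · intro i _ hi
              simp only [Pi.single_apply]
              rw [if_neg, mul_zero]
              intro h
              have hv := congrArg Fin.val h
              simp only [Fin.coe_castLE] at hv
              exact hi (Fin.ext hv.symm)
            · intro h; exact absurd (Finset.mem_univ _) h
          rw [h1, h2, h3, sub_self]
        · have h2 : g0 j s = if (s : ℕ) = (t : ℕ) then 1 else 0 := by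
            have hjval : (j : ℕ) = (t : ℕ) - m := rfl
            rw [hg0]
            simp only [dif_neg hs]
            refine if_congr ?_ rfl rfl
            constructor <;> intro h <;> omega
          have h3 : ∑ i : Fin m, ((a j i : ℝ) : 𝕜) *
              (Pi.single (Fin.castLE hmd i) (1 : 𝕜) : Fin d → 𝕜) s
              = 0 := by
            apply Finset.sum_eq_zero
            intro i _
            simp only [Pi.single_apply]
            rw [if_neg, mul_zero]
            intro h
            have hv := congrArg Fin.val h
            have hi2 := i.isLt
            simp at hv
            omega
          rw [h2, h3, sub_zero, Pi.single_apply]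
          simp [Fin.ext_iff]
      rw [heq]
      exact Submodule.sub_mem _ (Submodule.subset_span ⟨Sum.inr j, rfl⟩)
        (Submodule.sum_mem _ fun i _ => Submodule.smul_mem _ _
          (Submodule.subset_span ⟨Sum.inl i, rfl⟩))
  · rintro (i | j) (i' | j') hxy
    · have hii : i ≠ i' := fun h => hxy (by rw [h])
      have hci : Fin.castLE hmd i ≠ Fin.castLE hmd i' :=
        fun h => hii (Fin.castLE_injective hmd h)
      have hz : (inner 𝕜 (f (Sum.inl i)) (f (Sum.inl i')) : 𝕜) = 0 := by
        rw [hf]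
        simp only [Sum.elim_inl]
        rw [EuclideanSpace.inner_single_left]
        simp [EuclideanSpace.single_apply, hci, hii]
      simp [hz, cbg_adj]
    · have hval : (inner 𝕜 (f (Sum.inl i)) (f (Sum.inr j')) : 𝕜) = ((a j' i : ℝ) : 𝕜) := by
        rw [hf]
        simp only [Sum.elim_inl, Sum.elim_inr]
        rw [EuclideanSpace.inner_single_left]
        rw [show ((WithLp.equiv 2 (Fin d → 𝕜)).symm (g0 j')) (Fin.castLE hmd i)
            = g0 j' (Fin.castLE hmd i) from rfl, hg0lt]
        simp
      simp [hval, cbg_adj, RCLike.ofReal_ne_zero, ha0 j' i]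
    · have hval : (inner 𝕜 (f (Sum.inr j)) (f (Sum.inl i')) : 𝕜) = ((a j i' : ℝ) : 𝕜) := by
        rw [hf]
        simp only [Sum.elim_inl, Sum.elim_inr]
        rw [EuclideanSpace.inner_single_right]
        rw [show ((WithLp.equiv 2 (Fin d → 𝕜)).symm (g0 j)) (Fin.castLE hmd i')
            = g0 j (Fin.castLE hmd i') from rfl, hg0lt]
        simp [RCLike.conj_ofReal]
      simp [hval, cbg_adj, RCLike.ofReal_ne_zero, ha0 j i']
    · have hjj : j ≠ j' := fun h => hxy (by rw [h])
      have hz : (inner 𝕜 (f (Sum.inr j)) (f (Sum.inr j')) : 𝕜) = 0 := by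
        rw [hf]
        simp only [Sum.elim_inr]
        rw [PiLp.inner_apply]
        simp only [RCLike.inner_apply', WithLp.equiv_symm_apply, PiLp.toLp_apply]
        have hterm : ∀ t : Fin d, (starRingEnd 𝕜) (g0 j t) * g0 j' t
            = if h : (t : ℕ) < m then ((a j ⟨t, h⟩ * a j' ⟨t, h⟩ : ℝ) : 𝕜) else 0 := by
          intro t
          by_cases h : (t : ℕ) < m
          · rw [hg0]
            simp only [dif_pos h]
            rw [RCLike.conj_ofReal]
            push_cast
            ring
          · have hj1 : ¬((t : ℕ) = m + (j : ℕ) ∧ (t : ℕ) = m + (j' : ℕ)) := by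
              rintro ⟨e1, e2⟩
              exact hjj (Fin.ext (by omega))
            have hvne : (j : ℕ) ≠ (j' : ℕ) := fun hh => hjj (Fin.ext hh)
            rw [hg0]
            simp only [dif_neg h]
            by_cases h1 : (t : ℕ) = m + (j : ℕ) <;>
              by_cases h2 : (t : ℕ) = m + (j' : ℕ)
            · exact absurd ⟨h1, h2⟩ hj1
            · simp [h1, h2, hvne, Ne.symm hvne]
            · simp [h1, h2, hvne, Ne.symm hvne]
            · simp [h1, h2, hvne, Ne.symm hvne]
        rw [show (∑ t : Fin d, (starRingEnd 𝕜) (g0 j t) * g0 j' t)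
              = ∑ i : Fin m, ((a j i * a j' i : ℝ) : 𝕜) from
            (Finset.sum_congr rfl fun t _ => hterm t).trans
              (sum_dite_lt hmd fun i => ((a j i * a j' i : ℝ) : 𝕜))]
        rw [show ∑ i : Fin m, ((a j i * a j' i : ℝ) : 𝕜)
            = ((∑ i : Fin m, a j i * a j' i : ℝ) : 𝕜) from (RCLike.ofReal_sum _ _).symm]
        rw [haorth j j' hjj, RCLike.ofReal_zero]
      simp [hz, cbg_adj]

end AuxLemmas
/-- for `m ≥ n ≥ 1`, `mr₊^ℝ(K_{m,n}) = mr₊^ℂ(K_{m,n}) = m`, and `K_{m,n}` is a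
frame graph in a real (or complex) inner product space of dimension `d` iff `m ≤ d ≤ m + n`. -/
theorem mrPlus_completeBipartite (m n : ℕ) (hn : 1 ≤ n) (hmn : n ≤ m) :
    mrPlus ℝ (completeBipartiteGraph (Fin m) (Fin n)) = m ∧
    mrPlus ℂ (completeBipartiteGraph (Fin m) (Fin n)) = m ∧
    ∀ d : ℕ,
      (IsFrameGraphIn ℝ (completeBipartiteGraph (Fin m) (Fin n)) d ↔ m ≤ d ∧ d ≤ m + n) ∧
      (IsFrameGraphIn ℂ (completeBipartiteGraph (Fin m) (Fin n)) d ↔ m ≤ d ∧ d ≤ m + n) := by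
  have hmr : ∀ (𝕜 : Type) (inst : RCLike 𝕜),
      mrPlus 𝕜 (completeBipartiteGraph (Fin m) (Fin n)) = m := by
    intro 𝕜 inst
    obtain ⟨A, hA, hpat, hrank⟩ := exists_good_matrix 𝕜 m n hn hmn
    have hmem : m ∈ {r : ℕ | ∃ A : Matrix (Fin m ⊕ Fin n) (Fin m ⊕ Fin n) 𝕜,
        A.PosSemidef ∧
        (∀ i j, i ≠ j →
          (A i j ≠ 0 ↔ (completeBipartiteGraph (Fin m) (Fin n)).Adj i j)) ∧
        A.rank = r} := ⟨A, hA, hpat, hrank⟩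
    unfold mrPlus
    refine le_antisymm (Nat.sInf_le hmem) (le_csInf ⟨m, hmem⟩ ?_)
    rintro r ⟨A', hA', hpat', rfl⟩
    exact m_le_rank_of_pattern hn hA' hpat'
  have hfr : ∀ (𝕜 : Type) (inst : RCLike 𝕜) (d : ℕ),
      IsFrameGraphIn 𝕜 (completeBipartiteGraph (Fin m) (Fin n)) d ↔ m ≤ d ∧ d ≤ m + n := by
    intro 𝕜 inst d
    constructor
    · rintro ⟨f, hspan, hpat⟩
      constructor
      · have hli : LinearIndependent 𝕜 fun i : Fin m =>
            (WithLp.equiv 2 (Fin d → 𝕜)) (f (Sum.inl i)) := by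
          apply linearIndependent_of_orth'
          · intro i h
            have hf0 : f (Sum.inl i) = 0 := by
              have h2 := congrArg (WithLp.equiv 2 (Fin d → 𝕜)).symm h
              simpa using h2
            have hadj := (hpat (Sum.inl i) (Sum.inr (⟨0, hn⟩ : Fin n))
              (by simp)).mpr (by simp [cbg_adj])
            rw [hf0] at hadj
            exact hadj (inner_zero_left _)
          · intro i i' hii
            have h0 : ¬ (inner 𝕜 (f (Sum.inl i)) (f (Sum.inl i')) : 𝕜) ≠ 0 := by
              rw [hpat _ _ (by simp [hii])]
              simp [cbg_adj]
            have h0' := not_not.mp h0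
            rw [PiLp.inner_apply] at h0'
            simpa only [RCLike.inner_apply', WithLp.equiv_apply] using h0'
        have hcard := hli.fintype_card_le_finrank
        simpa [Module.finrank_fintype_fun_eq_card] using hcard
      · classical
        have h1 : Module.finrank 𝕜 (EuclideanSpace 𝕜 (Fin d)) = d :=
          finrank_euclideanSpace_fin
        calc d = Module.finrank 𝕜 (⊤ : Submodule 𝕜 (EuclideanSpace 𝕜 (Fin d))) := by
              rw [finrank_top, h1]
          _ = Module.finrank 𝕜 (Submodule.span 𝕜 (Set.range f)) := by rw [hspan]
          _ ≤ (Set.range f).toFinset.card := finrank_span_le_card _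
          _ = Fintype.card (Set.range f) := Set.toFinset_card _
          _ ≤ Fintype.card (Fin m ⊕ Fin n) := Fintype.card_range_le f
          _ = m + n := by simp
    · rintro ⟨h1, h2⟩
      exact isFrameGraphIn_of_le hmn h1 h2
  exact ⟨hmr ℝ inferInstance, hmr ℂ inferInstance,
    fun d => ⟨hfr ℝ inferInstance d, hfr ℂ inferInstance d⟩⟩
end

section
/- Let n, m ≥ 2 and let G = P_n ⊠ P_m be the strong product of the path on n vertices with the path on m vertices. Then mr_+^R(G) = mr_+^C(G) = (n−1)(m−1). Consequently, G is a frame graph in a real (or complex) inner product space of dimension d if and only if (n−1)(m−1) ≤ d ≤ nm. -/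
open scoped ComplexOrder

namespace MrAux


variable {𝕜 : Type} [RCLike 𝕜]

def uVec (𝕜 : Type) [RCLike 𝕜] (n : ℕ) (i : Fin n) (k : Fin (n-1)) : 𝕜 :=
  if i.val = k.val ∨ i.val = k.val + 1 then 1 else 0

lemma star_uVec (n : ℕ) (i : Fin n) (k : Fin (n-1)) :
    star (uVec 𝕜 n i k) = uVec 𝕜 n i k := by
  unfold uVec; split <;> simp

noncomputable def gVec (𝕜 : Type) [RCLike 𝕜] (n m : ℕ) (p : Fin n × Fin m) :
    EuclideanSpace 𝕜 (Fin (n-1) × Fin (m-1)) :=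
  WithLp.toLp 2 (fun kl => uVec 𝕜 n p.1 kl.1 * uVec 𝕜 m p.2 kl.2)

def dot1 (𝕜 : Type) [RCLike 𝕜] (n : ℕ) (i j : Fin n) : 𝕜 :=
  ∑ k : Fin (n-1), uVec 𝕜 n i k * uVec 𝕜 n j k

def near {n : ℕ} (i j : Fin n) : Prop :=
  i.val = j.val ∨ i.val = j.val + 1 ∨ j.val = i.val + 1

lemma dot1_ne_zero_iff {n : ℕ} (hn : 2 ≤ n) (i j : Fin n) :
    dot1 𝕜 n i j ≠ 0 ↔ near i j := by
  have : dot1 𝕜 n i j = ((Finset.univ.filter (fun k : Fin (n-1) =>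
      (i.val = k.val ∨ i.val = k.val + 1) ∧ (j.val = k.val ∨ j.val = k.val + 1))).card : 𝕜) := by
    rw [Finset.card_filter]
    push_cast
    apply Finset.sum_congr rfl
    intro k _
    unfold uVec
    by_cases h1 : i.val = k.val ∨ i.val = k.val + 1 <;>
      by_cases h2 : j.val = k.val ∨ j.val = k.val + 1 <;> simp [h1, h2]
  rw [this]
  rw [Nat.cast_ne_zero, ← Nat.pos_iff_ne_zero, Finset.card_pos]
  constructor
  · rintro ⟨k, hk⟩
    simp only [Finset.mem_filter] at hk
    have := k.isLt
    unfold near; omega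
  · intro h
    unfold near at h
    have hi := i.isLt
    have hj := j.isLt
    rcases h with h | h | h
    · by_cases hlt : i.val < n - 1
      · exact ⟨⟨i.val, hlt⟩, by simp; omega⟩
      · exact ⟨⟨i.val - 1, by omega⟩, by simp; omega⟩
    · exact ⟨⟨j.val, by omega⟩, by simp; omega⟩
    · exact ⟨⟨i.val, by omega⟩, by simp; omega⟩

lemma inner_gVec (n m : ℕ) (p q : Fin n × Fin m) :
    (inner 𝕜 (gVec 𝕜 n m p) (gVec 𝕜 n m q) : 𝕜) = dot1 𝕜 n p.1 q.1 * dot1 𝕜 m p.2 q.2 := by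
  rw [PiLp.inner_apply]
  simp only [RCLike.inner_apply']
  unfold dot1
  rw [Finset.sum_mul_sum]
  rw [← Finset.sum_product']
  apply Finset.sum_congr rfl
  intro kl _
  show (starRingEnd 𝕜) (gVec 𝕜 n m p kl) * gVec 𝕜 n m q kl = _
  unfold gVec
  rw [map_mul]
  have h1 := star_uVec (𝕜 := 𝕜) n p.1 kl.1
  have h2 := star_uVec (𝕜 := 𝕜) m p.2 kl.2
  simp only [RingHom.coe_coe] at *
  rw [show (starRingEnd 𝕜) (uVec 𝕜 n p.1 kl.1) = uVec 𝕜 n p.1 kl.1 from h1,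
     show (starRingEnd 𝕜) (uVec 𝕜 m p.2 kl.2) = uVec 𝕜 m p.2 kl.2 from h2]
  ring

lemma adj_iff {n m : ℕ} (p q : Fin n × Fin m) (hpq : p ≠ q) :
    (strongProd (SimpleGraph.pathGraph n) (SimpleGraph.pathGraph m)).Adj p q ↔
      (near p.1 q.1 ∧ near p.2 q.2) := by
  have hne : ¬ (p.1.val = q.1.val ∧ p.2.val = q.2.val) := by
    rintro ⟨h1, h2⟩
    exact hpq (Prod.ext (Fin.ext h1) (Fin.ext h2))
  show ((p.1 = q.1 ∧ _) ∨ (p.2 = q.2 ∧ _) ∨ _) ↔ _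
  simp only [SimpleGraph.pathGraph_adj, Fin.ext_iff]
  unfold near
  omega

lemma inner_gVec_pattern {n m : ℕ} (hn : 2 ≤ n) (hm : 2 ≤ m) (p q : Fin n × Fin m)
    (hpq : p ≠ q) :
    (inner 𝕜 (gVec 𝕜 n m p) (gVec 𝕜 n m q) : 𝕜) ≠ 0 ↔
      (strongProd (SimpleGraph.pathGraph n) (SimpleGraph.pathGraph m)).Adj p q := by
  rw [inner_gVec, mul_ne_zero_iff, dot1_ne_zero_iff hn, dot1_ne_zero_iff hm, adj_iff p q hpq]


noncomputable def sing (𝕜 : Type) [RCLike 𝕜] (n m : ℕ) (a b : ℕ) :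
    EuclideanSpace 𝕜 (Fin (n-1) × Fin (m-1)) :=
  if h : a < n - 1 ∧ b < m - 1 then EuclideanSpace.single (⟨a, h.1⟩, ⟨b, h.2⟩) 1 else 0

lemma sing_apply (n m a b : ℕ) (kl : Fin (n-1) × Fin (m-1)) :
    sing 𝕜 n m a b kl = if kl.1.val = a ∧ kl.2.val = b then 1 else 0 := by
  unfold sing
  split_ifs with h h2 h2
  · rw [EuclideanSpace.single_apply, if_pos]
    obtain ⟨kl1, kl2⟩ := kl
    simp only [Prod.mk.injEq, Fin.ext_iff]
    exact h2
  · rw [EuclideanSpace.single_apply, if_neg]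
    obtain ⟨kl1, kl2⟩ := kl
    simp only [Prod.mk.injEq, Fin.ext_iff]
    exact h2
  · exact absurd ⟨h2.1 ▸ kl.1.isLt, h2.2 ▸ kl.2.isLt⟩ h
  · rfl

lemma gVec_eq_sum (n m : ℕ) (k l : ℕ) (hk : k < n - 1) (hl : l < m - 1) :
    gVec 𝕜 n m (⟨k+1, by omega⟩, ⟨l+1, by omega⟩) =
      sing 𝕜 n m k l + sing 𝕜 n m (k+1) l + sing 𝕜 n m k (l+1) + sing 𝕜 n m (k+1) (l+1) := by
  ext kl
  obtain ⟨k', l'⟩ := kl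
  simp only [PiLp.add_apply, sing_apply, gVec, uVec, Fin.val_mk, PiLp.toLp_apply]
  have hk' := k'.isLt
  have hl' := l'.isLt
  split_ifs <;> (try norm_num) <;> omega


lemma sing_mem_span {n m : ℕ} :
    ∀ (N : ℕ) (k : Fin (n-1)) (l : Fin (m-1)), (n - 2 - k.val) + (m - 2 - l.val) ≤ N →
      EuclideanSpace.single (k, l) (1:𝕜) ∈ Submodule.span 𝕜 (Set.range (gVec 𝕜 n m)) := by
  intro N
  induction N with
  | zero =>
    intro k l hN
    have hk := k.isLt; have hl := l.isLt
    have hid := gVec_eq_sum (𝕜 := 𝕜) n m k.val l.val k.isLt l.isLt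
    have e1 : sing 𝕜 n m (k.val+1) l.val = 0 := by
      unfold sing; rw [dif_neg]; rintro ⟨h, -⟩; omega
    have e2 : sing 𝕜 n m k.val (l.val+1) = 0 := by
      unfold sing; rw [dif_neg]; rintro ⟨-, h⟩; omega
    have e3 : sing 𝕜 n m (k.val+1) (l.val+1) = 0 := by
      unfold sing; rw [dif_neg]; rintro ⟨h, -⟩; omega
    have e0 : sing 𝕜 n m k.val l.val = EuclideanSpace.single (k, l) (1:𝕜) :=
      dif_pos ⟨k.isLt, l.isLt⟩
    rw [e1, e2, e3, e0] at hid
    simp only [add_zero] at hid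
    rw [← hid]
    exact Submodule.subset_span ⟨_, rfl⟩
  | succ N ih =>
    intro k l hN
    have hk := k.isLt; have hl := l.isLt
    have hid := gVec_eq_sum (𝕜 := 𝕜) n m k.val l.val k.isLt l.isLt
    have mem1 : sing 𝕜 n m (k.val+1) l.val ∈ Submodule.span 𝕜 (Set.range (gVec 𝕜 n m)) := by
      by_cases h : k.val + 1 < n - 1 ∧ l.val < m - 1
      · rw [show sing 𝕜 n m (k.val+1) l.val = EuclideanSpace.single
            ((⟨k.val+1, h.1⟩ : Fin (n-1)), (⟨l.val, h.2⟩ : Fin (m-1))) (1:𝕜) from dif_pos h]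
        exact ih _ _ (by simp only [Fin.val_mk]; omega)
      · rw [show sing 𝕜 n m (k.val+1) l.val = 0 from dif_neg h]; exact zero_mem _
    have mem2 : sing 𝕜 n m k.val (l.val+1) ∈ Submodule.span 𝕜 (Set.range (gVec 𝕜 n m)) := by
      by_cases h : k.val < n - 1 ∧ l.val + 1 < m - 1
      · rw [show sing 𝕜 n m k.val (l.val+1) = EuclideanSpace.single
            ((⟨k.val, h.1⟩ : Fin (n-1)), (⟨l.val+1, h.2⟩ : Fin (m-1))) (1:𝕜) from dif_pos h]
        exact ih _ _ (by simp only [Fin.val_mk]; omega)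
      · rw [show sing 𝕜 n m k.val (l.val+1) = 0 from dif_neg h]; exact zero_mem _
    have mem3 : sing 𝕜 n m (k.val+1) (l.val+1) ∈ Submodule.span 𝕜 (Set.range (gVec 𝕜 n m)) := by
      by_cases h : k.val + 1 < n - 1 ∧ l.val + 1 < m - 1
      · rw [show sing 𝕜 n m (k.val+1) (l.val+1) = EuclideanSpace.single
            ((⟨k.val+1, h.1⟩ : Fin (n-1)), (⟨l.val+1, h.2⟩ : Fin (m-1))) (1:𝕜) from dif_pos h]
        exact ih _ _ (by simp only [Fin.val_mk]; omega)
      · rw [show sing 𝕜 n m (k.val+1) (l.val+1) = 0 from dif_neg h]; exact zero_mem _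
    have e0 : sing 𝕜 n m k.val l.val = EuclideanSpace.single (k, l) (1:𝕜) :=
      dif_pos ⟨k.isLt, l.isLt⟩
    have : EuclideanSpace.single (k, l) (1:𝕜) = gVec 𝕜 n m (⟨k.val+1, by omega⟩, ⟨l.val+1, by omega⟩)
        - sing 𝕜 n m (k.val+1) l.val - sing 𝕜 n m k.val (l.val+1)
        - sing 𝕜 n m (k.val+1) (l.val+1) := by
      rw [hid, ← e0]; abel
    rw [this]
    exact sub_mem (sub_mem (sub_mem (Submodule.subset_span ⟨_, rfl⟩) mem1) mem2) mem3

lemma span_gVec {n m : ℕ} :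
    Submodule.span 𝕜 (Set.range (gVec 𝕜 n m)) = ⊤ := by
  rw [eq_top_iff, ← (PiLp.basisFun 2 𝕜 (Fin (n-1) × Fin (m-1))).span_eq, Submodule.span_le]
  rintro _ ⟨kl, rfl⟩
  rw [show (PiLp.basisFun 2 𝕜 (Fin (n-1) × Fin (m-1))) kl = EuclideanSpace.single kl (1:𝕜) by
    rw [PiLp.basisFun_apply]]
  obtain ⟨k, l⟩ := kl
  exact sing_mem_span _ k l (le_refl _)

lemma indep_of_pattern {n m : ℕ} (hn : 2 ≤ n) (hm : 2 ≤ m) {W : Type} [NormedAddCommGroup W]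
    [InnerProductSpace 𝕜 W] (f : Fin n × Fin m → W)
    (hf : ∀ p q : Fin n × Fin m, p ≠ q → ((inner 𝕜 (f p) (f q) : 𝕜) ≠ 0 ↔
      (strongProd (SimpleGraph.pathGraph n) (SimpleGraph.pathGraph m)).Adj p q)) :
    LinearIndependent 𝕜 (fun x : Fin (n-1) × Fin (m-1) =>
      f (Fin.castLE (Nat.sub_le n 1) x.1, Fin.castLE (Nat.sub_le m 1) x.2)) := by
  rw [Fintype.linearIndependent_iff]
  intro c hc
  by_contra hcon
  push_neg at hcon
  obtain ⟨x₁, hx₁⟩ := hcon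
  set s : Finset (Fin (n-1) × Fin (m-1)) := Finset.univ.filter (fun x => c x ≠ 0) with hs
  have hsne : s.Nonempty := ⟨x₁, by simp [hs, hx₁]⟩
  obtain ⟨x₀, hx₀s, hmax⟩ := Finset.exists_max_image s (fun x => x.1.val * m + x.2.val) hsne
  have hc₀ : c x₀ ≠ 0 := by
    have := hx₀s; simp only [hs, Finset.mem_filter] at this; exact this.2
  have hk0 := x₀.1.isLt; have hl0 := x₀.2.isLt
  have hwb1 : x₀.1.val + 1 < n := by omega
  have hwb2 : x₀.2.val + 1 < m := by omega
  set w : Fin n × Fin m := (⟨x₀.1.val + 1, hwb1⟩, ⟨x₀.2.val + 1, hwb2⟩) with hw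
  have key : ∀ x : Fin (n-1) × Fin (m-1), x ≠ x₀ →
      c x * (inner 𝕜 (f w) (f (Fin.castLE (Nat.sub_le n 1) x.1,
        Fin.castLE (Nat.sub_le m 1) x.2)) : 𝕜) = 0 := by
    intro x hxne
    by_cases hcx : c x = 0
    · rw [hcx, zero_mul]
    have hxs : x ∈ s := by simp only [hs, Finset.mem_filter]; exact ⟨Finset.mem_univ x, hcx⟩
    have hkey := hmax x hxs
    have hge : ¬ (x₀.1.val ≤ x.1.val ∧ x₀.2.val ≤ x.2.val) := by
      rintro ⟨h1, h2⟩
      apply hxne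
      have h2m := x.2.isLt
      have e1 : x.1.val = x₀.1.val := by
        rcases Nat.eq_or_lt_of_le h1 with h | h
        · omega
        · exfalso
          have hmul := Nat.mul_le_mul_right m (show x₀.1.val + 1 ≤ x.1.val from h)
          rw [add_mul, one_mul] at hmul
          omega
      have hmm : x.1.val * m = x₀.1.val * m := by rw [e1]
      have e2 : x.2.val = x₀.2.val := by omega
      exact Prod.ext (Fin.ext e1) (Fin.ext e2)
    have hinner : (inner 𝕜 (f w) (f (Fin.castLE (Nat.sub_le n 1) x.1,
        Fin.castLE (Nat.sub_le m 1) x.2)) : 𝕜) = 0 := by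
      set p : Fin n × Fin m := (Fin.castLE (Nat.sub_le n 1) x.1,
        Fin.castLE (Nat.sub_le m 1) x.2) with hp
      by_contra hne0
      have hwne : w ≠ p := by
        intro heq
        apply hge
        have h1 : w.1.val = p.1.val := by rw [heq]
        have h2 : w.2.val = p.2.val := by rw [heq]
        simp only [hw, hp, Fin.coe_castLE, Fin.val_mk] at h1 h2
        omega
      have hadj := (hf w p hwne).mp hne0
      rw [adj_iff _ _ hwne] at hadj
      obtain ⟨ha1, ha2⟩ := hadj
      unfold near at ha1 ha2
      simp only [hw, hp, Fin.coe_castLE, Fin.val_mk] at ha1 ha2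
      exact hge ⟨by omega, by omega⟩
    rw [hinner, mul_zero]
  have h0 : ∑ x : Fin (n-1) × Fin (m-1), c x * (inner 𝕜 (f w)
      (f (Fin.castLE (Nat.sub_le n 1) x.1, Fin.castLE (Nat.sub_le m 1) x.2)) : 𝕜) = 0 := by
    have h1 : (inner 𝕜 (f w) (∑ x : Fin (n-1) × Fin (m-1),
        c x • f (Fin.castLE (Nat.sub_le n 1) x.1, Fin.castLE (Nat.sub_le m 1) x.2)) : 𝕜) = 0 := by
      rw [hc, inner_zero_right]
    rw [inner_sum] at h1
    simpa only [inner_smul_right] using h1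
  rw [Finset.sum_eq_single x₀ (fun x _ hxne => key x hxne)
    (fun h => absurd (Finset.mem_univ x₀) h)] at h0
  have hadj : (inner 𝕜 (f w) (f (Fin.castLE (Nat.sub_le n 1) x₀.1,
      Fin.castLE (Nat.sub_le m 1) x₀.2)) : 𝕜) ≠ 0 := by
    set p : Fin n × Fin m := (Fin.castLE (Nat.sub_le n 1) x₀.1,
      Fin.castLE (Nat.sub_le m 1) x₀.2) with hp
    have hwne : w ≠ p := by
      intro heq
      have h1 : w.1.val = p.1.val := by rw [heq]
      simp only [hw, hp, Fin.coe_castLE, Fin.val_mk] at h1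
      omega
    rw [hf w p hwne, adj_iff _ _ hwne]
    have g1 : w.1.val = p.1.val + 1 := by
      simp only [hw, hp, Fin.coe_castLE, Fin.val_mk]
    have g2 : w.2.val = p.2.val + 1 := by
      simp only [hw, hp, Fin.coe_castLE, Fin.val_mk]
    exact ⟨Or.inr (Or.inl g1), Or.inr (Or.inl g2)⟩
  exact hc₀ ((mul_eq_zero.mp h0).resolve_right hadj)





noncomputable def gMatB (𝕜 : Type) [RCLike 𝕜] (n m : ℕ) :
    Matrix (Fin (n-1) × Fin (m-1)) (Fin n × Fin m) 𝕜 :=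
  fun kl p => gVec 𝕜 n m p kl

noncomputable def gMat (𝕜 : Type) [RCLike 𝕜] (n m : ℕ) :
    Matrix (Fin n × Fin m) (Fin n × Fin m) 𝕜 :=
  (gMatB 𝕜 n m).conjTranspose * (gMatB 𝕜 n m)

lemma gMat_apply (n m : ℕ) (p q : Fin n × Fin m) :
    gMat 𝕜 n m p q = (inner 𝕜 (gVec 𝕜 n m p) (gVec 𝕜 n m q) : 𝕜) := by
  rw [gMat, Matrix.mul_apply, PiLp.inner_apply]
  apply Finset.sum_congr rfl
  intro kl _
  rw [Matrix.conjTranspose_apply, RCLike.inner_apply']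
  rfl

lemma gMat_posSemidef (n m : ℕ) : (gMat 𝕜 n m).PosSemidef :=
  Matrix.posSemidef_conjTranspose_mul_self _

lemma gMatB_transpose_eq (n m : ℕ) : (gMatB 𝕜 n m).col = fun p => WithLp.ofLp (gVec 𝕜 n m p) := rfl

lemma gMat_rank (n m : ℕ) : (gMat 𝕜 n m).rank = (n-1) * (m-1) := by
  rw [gMat, Matrix.rank_conjTranspose_mul_self, Matrix.rank_eq_finrank_span_cols,
    gMatB_transpose_eq]
  rw [show Submodule.span 𝕜 (Set.range (fun p => WithLp.ofLp (gVec 𝕜 n m p))) = ⊤ by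
    rw [show Set.range (fun p => WithLp.ofLp (gVec 𝕜 n m p)) =
        (WithLp.linearEquiv 2 𝕜 (Fin (n-1) × Fin (m-1) → 𝕜)).toLinearMap '' Set.range (gVec 𝕜 n m) by
      rw [← Set.range_comp]; rfl,
      Submodule.span_image, span_gVec, Submodule.map_top, LinearEquiv.range]]
  rw [finrank_top]
  rw [Module.finrank_fintype_fun_eq_card]
  simp [Fintype.card_prod]

open scoped MatrixOrder in
lemma rank_ge_of_pattern {n m : ℕ} (hn : 2 ≤ n) (hm : 2 ≤ m)
    (A : Matrix (Fin n × Fin m) (Fin n × Fin m) 𝕜) (hA : A.PosSemidef)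
    (hpat : ∀ p q : Fin n × Fin m, p ≠ q → (A p q ≠ 0 ↔
      (strongProd (SimpleGraph.pathGraph n) (SimpleGraph.pathGraph m)).Adj p q)) :
    (n-1) * (m-1) ≤ A.rank := by
  classical
  set S := CFC.sqrt A with hSdef
  have hherm : S.conjTranspose = S := (CFC.sqrt_nonneg A).isSelfAdjoint
  have hSS : S.conjTranspose * S = A := by rw [hherm]; exact CFC.sqrt_mul_sqrt_self A hA.nonneg
  set x : (Fin n × Fin m) → EuclideanSpace 𝕜 (Fin n × Fin m) :=
    fun p => WithLp.toLp 2 (S.transpose p) with hx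
  have hinner : ∀ p q, (inner 𝕜 (x p) (x q) : 𝕜) = A p q := by
    intro p q
    rw [PiLp.inner_apply, ← hSS, Matrix.mul_apply]
    apply Finset.sum_congr rfl
    intro i _
    rw [RCLike.inner_apply', Matrix.conjTranspose_apply]
    rfl
  have hpat' : ∀ p q : Fin n × Fin m, p ≠ q → ((inner 𝕜 (x p) (x q) : 𝕜) ≠ 0 ↔
      (strongProd (SimpleGraph.pathGraph n) (SimpleGraph.pathGraph m)).Adj p q) := by
    intro p q hpq
    rw [hinner]
    exact hpat p q hpq
  have hindep := indep_of_pattern hn hm x hpat'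
  have h1 : A.rank = S.rank := by rw [← hSS, Matrix.rank_conjTranspose_mul_self]
  rw [h1, Matrix.rank_eq_finrank_span_cols]
  have hindep' : LinearIndependent 𝕜 (fun y : Fin (n-1) × Fin (m-1) =>
      WithLp.ofLp (x (Fin.castLE (Nat.sub_le n 1) y.1, Fin.castLE (Nat.sub_le m 1) y.2))) :=
    hindep.map' (WithLp.linearEquiv 2 𝕜 _).toLinearMap (WithLp.linearEquiv 2 𝕜 _).ker
  have h2 : Module.finrank 𝕜 (Submodule.span 𝕜 (Set.range (fun y : Fin (n-1) × Fin (m-1) =>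
      WithLp.ofLp (x (Fin.castLE (Nat.sub_le n 1) y.1, Fin.castLE (Nat.sub_le m 1) y.2))))) = (n-1)*(m-1) := by
    rw [finrank_span_eq_card hindep']
    simp [Fintype.card_prod]
  rw [← h2]
  apply Submodule.finrank_mono
  apply Submodule.span_mono
  rintro _ ⟨y, rfl⟩
  exact ⟨(Fin.castLE (Nat.sub_le n 1) y.1, Fin.castLE (Nat.sub_le m 1) y.2), rfl⟩




def FrameIdx (𝕜 : Type) [RCLike 𝕜] {V : Type} (G : SimpleGraph V) (ι : Type) [Fintype ι] : Prop :=
  ∃ f : V → EuclideanSpace 𝕜 ι,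
    Submodule.span 𝕜 (Set.range f) = ⊤ ∧
    ∀ i j : V, i ≠ j → ((inner 𝕜 (f i) (f j) : 𝕜) ≠ 0 ↔ G.Adj i j)

lemma frame_transfer {V : Type} (G : SimpleGraph V) {ι κ : Type}
    [Fintype ι] [Fintype κ] (e : ι ≃ κ) (h : FrameIdx 𝕜 G ι) : FrameIdx 𝕜 G κ := by
  obtain ⟨f, hspan, hpat⟩ := h
  set T := LinearIsometryEquiv.piLpCongrLeft 2 𝕜 (E := 𝕜) e with hT
  refine ⟨fun v => T (f v), ?_, ?_⟩
  · rw [eq_top_iff]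
    intro x _
    have hx : T.symm x ∈ Submodule.span 𝕜 (Set.range f) := by rw [hspan]; trivial
    have h2 := Submodule.apply_mem_span_image_of_mem_span (s := Set.range f) T.toLinearEquiv.toLinearMap hx
    rw [← Set.range_comp] at h2
    simpa [Function.comp_def, T.apply_symm_apply] using h2
  · intro i j hij
    rw [LinearIsometryEquiv.inner_map_map]
    exact hpat i j hij

lemma exists_redundant {V ι : Type} [Fintype V] [Fintype ι]
    (f : V → EuclideanSpace 𝕜 ι) (hspan : Submodule.span 𝕜 (Set.range f) = ⊤)
    (hlt : Fintype.card ι < Fintype.card V) :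
    ∃ v : V, Submodule.span 𝕜 (f '' (Set.univ \ {v})) = ⊤ := by
  by_contra hcon
  push_neg at hcon
  have hni : ∀ v : V, f v ∉ Submodule.span 𝕜 (f '' (Set.univ \ {v})) := by
    intro v hv
    apply hcon v
    rw [eq_top_iff, ← hspan, Submodule.span_le]
    rintro _ ⟨u, rfl⟩
    by_cases hu : u = v
    · subst hu; exact hv
    · exact Submodule.subset_span ⟨u, ⟨trivial, by simp [hu]⟩, rfl⟩
  have hli : LinearIndependent 𝕜 f := linearIndependent_iff_notMem_span.mpr hni
  have := hli.fintype_card_le_finrank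
  rw [finrank_euclideanSpace] at this
  omega

lemma frame_step {V ι : Type} [Fintype V] [DecidableEq V] [Fintype ι] [DecidableEq ι]
    (G : SimpleGraph V) (hlt : Fintype.card ι < Fintype.card V) (h : FrameIdx 𝕜 G ι) :
    FrameIdx 𝕜 G (ι ⊕ Unit) := by
  obtain ⟨f, hspan, hpat⟩ := h
  obtain ⟨v₀, hv₀⟩ := exists_redundant f hspan hlt
  let L : EuclideanSpace 𝕜 ι →ₗ[𝕜] EuclideanSpace 𝕜 (ι ⊕ Unit) :=
    { toFun := fun w => WithLp.toLp 2 (Sum.elim (WithLp.ofLp w) 0)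
      map_add' := by
        intro a b; ext x; cases x <;> simp [PiLp.add_apply]
      map_smul' := by
        intro c a; ext x; cases x <;> simp [PiLp.smul_apply] }
  set F : V → EuclideanSpace 𝕜 (ι ⊕ Unit) :=
    fun v => WithLp.toLp 2 (Sum.elim (WithLp.ofLp (f v)) (fun _ => if v = v₀ then 1 else 0)) with hF
  have hFL : ∀ v : V, v ≠ v₀ → F v = L (f v) := by
    intro v hv
    ext x
    cases x with
    | inl i => rfl
    | inr u => show (if v = v₀ then (1:𝕜) else 0) = 0; rw [if_neg hv]
  have hLmem : ∀ w : EuclideanSpace 𝕜 ι, L w ∈ Submodule.span 𝕜 (Set.range F) := by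
    intro w
    have hw : w ∈ Submodule.span 𝕜 (f '' (Set.univ \ {v₀})) := by rw [hv₀]; trivial
    have h2 := Submodule.apply_mem_span_image_of_mem_span (s := f '' (Set.univ \ {v₀})) L hw
    have himg : (⇑L '' (f '' (Set.univ \ {v₀}))) ⊆ Set.range F := by
      rintro _ ⟨_, ⟨u, hu, rfl⟩, rfl⟩
      exact ⟨u, hFL u (by simpa using hu.2)⟩
    exact Submodule.span_mono himg h2
  have hsingle : EuclideanSpace.single (Sum.inr () : ι ⊕ Unit) (1:𝕜)
      ∈ Submodule.span 𝕜 (Set.range F) := by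
    have heq : EuclideanSpace.single (Sum.inr () : ι ⊕ Unit) (1:𝕜) = F v₀ - L (f v₀) := by
      ext x
      rw [PiLp.sub_apply]
      cases x with
      | inl i =>
        rw [EuclideanSpace.single_apply, if_neg (by simp)]
        show (0:𝕜) = f v₀ i - f v₀ i
        rw [sub_self]
      | inr u =>
        rw [EuclideanSpace.single_apply, if_pos rfl]
        show (1:𝕜) = (if v₀ = v₀ then (1:𝕜) else 0) - 0
        rw [if_pos rfl, sub_zero]
    rw [heq]
    exact sub_mem (Submodule.subset_span ⟨v₀, rfl⟩) (hLmem _)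
  refine ⟨F, ?_, ?_⟩
  · rw [eq_top_iff, ← (PiLp.basisFun 2 𝕜 (ι ⊕ Unit)).span_eq, Submodule.span_le]
    rintro _ ⟨x, rfl⟩
    rw [show (PiLp.basisFun 2 𝕜 (ι ⊕ Unit)) x = EuclideanSpace.single x (1:𝕜) by
      rw [PiLp.basisFun_apply]]
    cases x with
    | inl i =>
      have heq : EuclideanSpace.single (Sum.inl i : ι ⊕ Unit) (1:𝕜)
          = L (EuclideanSpace.single i (1:𝕜)) := by
        ext x
        cases x with
        | inl j =>
          show _ = EuclideanSpace.single i (1:𝕜) j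
          rw [EuclideanSpace.single_apply, EuclideanSpace.single_apply]
          simp
        | inr u =>
          show _ = (0:𝕜)
          rw [EuclideanSpace.single_apply, if_neg (by simp)]
      rw [heq]
      exact hLmem _
    | inr u =>
      cases u
      exact hsingle
  · intro i j hij
    have hinner : (inner 𝕜 (F i) (F j) : 𝕜) = inner 𝕜 (f i) (f j) := by
      rw [PiLp.inner_apply, PiLp.inner_apply, Fintype.sum_sum_type]
      have hz : ∑ u : Unit, (inner 𝕜 (F i (Sum.inr u)) (F j (Sum.inr u)) : 𝕜) = 0 := by
        have : ∀ u : Unit, (inner 𝕜 (F i (Sum.inr u)) (F j (Sum.inr u)) : 𝕜) = 0 := by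
          intro u
          show (inner 𝕜 (if i = v₀ then (1:𝕜) else 0) (if j = v₀ then (1:𝕜) else 0) : 𝕜) = 0
          by_cases h1 : i = v₀
          · rw [if_neg (show j ≠ v₀ from fun h2 => hij (h1.trans h2.symm))]
            simp
          · rw [if_neg h1]; simp
        exact Finset.sum_eq_zero (fun u _ => this u)
      rw [hz, add_zero]
      rfl
    rw [hinner]
    exact hpat i j hij

lemma frame_iter {V : Type} [Fintype V] [DecidableEq V] (G : SimpleGraph V) :
    ∀ (k : ℕ) (ι : Type) (instF : Fintype ι) (instD : DecidableEq ι),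
      Fintype.card ι + k ≤ Fintype.card V → FrameIdx 𝕜 G ι →
      ∃ (κ : Type) (instκ : Fintype κ),
        Fintype.card κ = Fintype.card ι + k ∧ @FrameIdx 𝕜 _ V G κ instκ := by
  intro k
  induction k with
  | zero =>
    intro ι instF instD hle h
    exact ⟨ι, instF, by omega, h⟩
  | succ k ih =>
    intro ι instF instD hle h
    have hstep := frame_step G (by omega) h
    obtain ⟨κ, instκ, hcard, hκ⟩ := ih (ι ⊕ Unit) inferInstance inferInstance
      (by rw [Fintype.card_sum]; simp; omega) hstep
    rw [Fintype.card_sum] at hcard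
    exact ⟨κ, instκ, by simp at hcard; omega, hκ⟩


end MrAux

/-- for `n, m ≥ 2`, `mr₊(P_n ⊠ P_m) = (n−1)(m−1)`, and `P_n ⊠ P_m` is a frame
graph in a real (or complex) space of dimension `d` iff `(n−1)(m−1) ≤ d ≤ nm`. -/
theorem mrPlus_strongProd_path_path (n m : ℕ) (hn : 2 ≤ n) (hm : 2 ≤ m) :
    mrPlus ℝ (strongProd (SimpleGraph.pathGraph n) (SimpleGraph.pathGraph m)) =
      (n - 1) * (m - 1) ∧
    mrPlus ℂ (strongProd (SimpleGraph.pathGraph n) (SimpleGraph.pathGraph m)) =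
      (n - 1) * (m - 1) ∧
    ∀ d : ℕ,
      (IsFrameGraphIn ℝ (strongProd (SimpleGraph.pathGraph n) (SimpleGraph.pathGraph m)) d ↔
        (n - 1) * (m - 1) ≤ d ∧ d ≤ n * m) ∧
      (IsFrameGraphIn ℂ (strongProd (SimpleGraph.pathGraph n) (SimpleGraph.pathGraph m)) d ↔
        (n - 1) * (m - 1) ≤ d ∧ d ≤ n * m) := by
  have hmr : ∀ (𝕜 : Type) (inst : RCLike 𝕜),
      mrPlus 𝕜 (strongProd (SimpleGraph.pathGraph n) (SimpleGraph.pathGraph m)) =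
        (n-1)*(m-1) := by
    intro 𝕜 inst
    have hmem : ((n-1)*(m-1)) ∈ {r : ℕ | ∃ A : Matrix (Fin n × Fin m) (Fin n × Fin m) 𝕜,
        A.PosSemidef ∧ (∀ i j, i ≠ j → (A i j ≠ 0 ↔
          (strongProd (SimpleGraph.pathGraph n) (SimpleGraph.pathGraph m)).Adj i j)) ∧
        A.rank = r} := by
      refine ⟨MrAux.gMat 𝕜 n m, MrAux.gMat_posSemidef n m, ?_, MrAux.gMat_rank n m⟩
      intro p q hpq
      rw [MrAux.gMat_apply]
      exact MrAux.inner_gVec_pattern hn hm p q hpq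
    unfold mrPlus
    apply le_antisymm
    · exact Nat.sInf_le hmem
    · apply le_csInf ⟨_, hmem⟩
      rintro r ⟨A, hA, hpat, rfl⟩
      exact MrAux.rank_ge_of_pattern hn hm A hA hpat
  have hframe : ∀ (𝕜 : Type) (inst : RCLike 𝕜) (d : ℕ),
      IsFrameGraphIn 𝕜 (strongProd (SimpleGraph.pathGraph n) (SimpleGraph.pathGraph m)) d ↔
        ((n-1)*(m-1) ≤ d ∧ d ≤ n*m) := by
    intro 𝕜 inst d
    constructor
    · rintro ⟨f, hspan, hpat⟩
      constructor
      · have hi := MrAux.indep_of_pattern hn hm f hpat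
        have hle := hi.fintype_card_le_finrank
        rw [finrank_euclideanSpace, Fintype.card_fin, Fintype.card_prod,
          Fintype.card_fin, Fintype.card_fin] at hle
        exact hle
      · have hle := finrank_le_of_span_eq_top hspan
        rw [finrank_euclideanSpace, Fintype.card_fin, Fintype.card_prod,
          Fintype.card_fin, Fintype.card_fin] at hle
        exact hle
    · rintro ⟨h1, h2⟩
      have base : MrAux.FrameIdx 𝕜
          (strongProd (SimpleGraph.pathGraph n) (SimpleGraph.pathGraph m))
          (Fin (n-1) × Fin (m-1)) :=
        ⟨MrAux.gVec 𝕜 n m, MrAux.span_gVec,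
          fun i j hij => MrAux.inner_gVec_pattern hn hm i j hij⟩
      obtain ⟨κ, instκ, hcard, hκ⟩ := MrAux.frame_iter (𝕜 := 𝕜)
        (strongProd (SimpleGraph.pathGraph n) (SimpleGraph.pathGraph m))
        (d - (n-1)*(m-1)) (Fin (n-1) × Fin (m-1)) inferInstance inferInstance
        (by rw [Fintype.card_prod, Fintype.card_fin, Fintype.card_fin, Fintype.card_prod,
          Fintype.card_fin, Fintype.card_fin]; omega) base
      letI := instκ
      have hcard' : Fintype.card κ = d := by
        rw [Fintype.card_prod, Fintype.card_fin, Fintype.card_fin] at hcard; omega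
      exact MrAux.frame_transfer _ (Fintype.equivFinOfCardEq hcard') hκ
  exact ⟨hmr ℝ _, hmr ℂ _, fun d => ⟨hframe ℝ _ d, hframe ℂ _ d⟩⟩
end

section
/- Let G be a connected graph on n ≥ 2 vertices and H a connected graph on m ≥ 2 vertices, with disjoint vertex sets. Suppose G is a frame graph in a complex inner product space of dimension d exactly when n' ≤ d ≤ n, and H is a frame graph in a complex inner product space of dimension d exactly when m' ≤ d ≤ m, where n' ≥ m'. Then the join G ∨ H is a frame graph in a complex inner product space of dimension d exactly when n' ≤ d ≤ n + m. Equivalently, mr_+^C(G ∨ H) = max{mr_+^C(G), mr_+^C(H)}. -/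
open scoped ComplexOrder

section AuxFrame

set_option linter.unusedSectionVars false

section GramAux
open Matrix

lemma isFrameGraphIn_of_family {V : Type} (G : SimpleGraph V)
    {E : Type*} [NormedAddCommGroup E] [InnerProductSpace ℂ E] [FiniteDimensional ℂ E]
    (f : V → E) (hpat : ∀ i j : V, i ≠ j → ((inner ℂ (f i) (f j) : ℂ) ≠ 0 ↔ G.Adj i j)) :
    IsFrameGraphIn ℂ G (Module.finrank ℂ (Submodule.span ℂ (Set.range f))) := by
  set W := Submodule.span ℂ (Set.range f) with hW
  have hmem : ∀ i, f i ∈ W := fun i => Submodule.subset_span ⟨i, rfl⟩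
  set g : V → W := fun i => ⟨f i, hmem i⟩ with hg
  have hspan : Submodule.span ℂ (Set.range g) = (⊤ : Submodule ℂ W) := by
    apply Submodule.map_injective_of_injective (Submodule.injective_subtype W)
    rw [Submodule.map_span, Submodule.map_top, Submodule.range_subtype]
    have : W.subtype '' (Set.range g) = Set.range f := by
      rw [← Set.range_comp]; rfl
    rw [this]
  let b := stdOrthonormalBasis ℂ W
  refine ⟨fun i => b.repr (g i), ?_, ?_⟩
  · rw [show (Set.range fun i => b.repr (g i)) = b.repr.toLinearEquiv.toLinearMap '' Set.range g
      from by rw [← Set.range_comp]; rfl, Submodule.span_image, hspan,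
      Submodule.map_top, LinearMap.range_eq_top]
    exact b.repr.surjective
  · intro i j hij
    rw [b.repr.inner_map_map]
    exact hpat i j hij

lemma span_eucl_image {ι κ : Type} [Fintype κ] (f : ι → EuclideanSpace ℂ κ) :
    Module.finrank ℂ (Submodule.span ℂ (Set.range f)) =
    Module.finrank ℂ (Submodule.span ℂ
      (Set.range (fun i => (WithLp.linearEquiv 2 ℂ (κ → ℂ)) (f i)))) := by
  rw [show Set.range (fun i => (WithLp.linearEquiv 2 ℂ (κ → ℂ)) (f i))
      = (WithLp.linearEquiv 2 ℂ (κ → ℂ)).toLinearMap '' Set.range f from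
    by rw [← Set.range_comp]; rfl, Submodule.span_image, LinearEquiv.finrank_map_eq]


lemma gram_fwd {V : Type} [Fintype V] [DecidableEq V] (G : SimpleGraph V) (d : ℕ)
    (h : IsFrameGraphIn ℂ G d) :
    ∃ A : Matrix V V ℂ, A.PosSemidef ∧
      (∀ i j : V, i ≠ j → (A i j ≠ 0 ↔ G.Adj i j)) ∧ A.rank = d := by
  obtain ⟨f, hspan, hpat⟩ := h
  let B : Matrix (Fin d) V ℂ := fun k i => f i k
  have hgram : ∀ i j, (Bᴴ * B) i j = (inner ℂ (f i) (f j) : ℂ) := by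
    intro i j
    rw [Matrix.mul_apply]
    simp only [Matrix.conjTranspose_apply]
    simp [Matrix.mul_apply, Matrix.conjTranspose_apply, PiLp.inner_apply, RCLike.inner_apply', B, mul_comm]
  refine ⟨Bᴴ * B, Matrix.posSemidef_conjTranspose_mul_self B, ?_, ?_⟩
  · intro i j hij; rw [hgram]; exact hpat i j hij
  · rw [Matrix.rank_conjTranspose_mul_self, Matrix.rank_eq_finrank_span_cols]
    have h2 := span_eucl_image f
    rw [show Set.range B.col
        = Set.range (fun i => (WithLp.linearEquiv 2 ℂ ((Fin d) → ℂ)) (f i)) from rfl, ← h2,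
      hspan, finrank_top]
    simp


lemma gram_bwd {V : Type} [Fintype V] [DecidableEq V] (G : SimpleGraph V) (d : ℕ)
    (h : ∃ A : Matrix V V ℂ, A.PosSemidef ∧
      (∀ i j : V, i ≠ j → (A i j ≠ 0 ↔ G.Adj i j)) ∧ A.rank = d) :
    IsFrameGraphIn ℂ G d := by
  obtain ⟨A, hA, hpat, hrank⟩ := h
  obtain ⟨B, rfl⟩ : ∃ B : Matrix V V ℂ, A = Bᴴ * B := by
    open scoped MatrixOrder in exact CStarAlgebra.nonneg_iff_eq_star_mul_self.mp hA.nonneg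
  let f : V → EuclideanSpace ℂ V := fun i => (WithLp.linearEquiv 2 ℂ (V → ℂ)).symm (Bᵀ i)
  have hinner : ∀ i j, (inner ℂ (f i) (f j) : ℂ) = (Bᴴ * B) i j := by
    intro i j
    simp [f, Matrix.mul_apply, Matrix.conjTranspose_apply, PiLp.inner_apply, RCLike.inner_apply', mul_comm]
  have hd : Module.finrank ℂ (Submodule.span ℂ (Set.range f)) = d := by
    rw [span_eucl_image f,
      show (Set.range fun i => (WithLp.linearEquiv 2 ℂ (V → ℂ)) (f i)) = Set.range B.col from rfl,
      ← Matrix.rank_eq_finrank_span_cols, ← Matrix.rank_conjTranspose_mul_self]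
    exact hrank
  have := isFrameGraphIn_of_family G f (fun i j hij => by rw [hinner]; exact hpat i j hij)
  rwa [hd] at this


lemma exists_isFrameGraphIn {V : Type} [Fintype V] [DecidableEq V] (G : SimpleGraph V) :
    ∃ d, IsFrameGraphIn ℂ G d := by
  classical
  let f : V → EuclideanSpace ℂ (V × V) := fun i => (WithLp.linearEquiv 2 ℂ _).symm
    (fun p => if (p.1 = i ∨ p.2 = i) ∧ G.Adj p.1 p.2 then 1 else 0)
  refine ⟨_, isFrameGraphIn_of_family G f ?_⟩
  intro i j hij
  have key : (inner ℂ (f i) (f j) : ℂ) =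
      ∑ p : V × V, if ((p.1 = i ∨ p.2 = i) ∧ G.Adj p.1 p.2) ∧
        ((p.1 = j ∨ p.2 = j) ∧ G.Adj p.1 p.2) then 1 else 0 := by
    rw [PiLp.inner_apply]
    refine Finset.sum_congr rfl (fun p _ => ?_)
    simp only [f, WithLp.linearEquiv_symm_apply]
    by_cases h1 : (p.1 = i ∨ p.2 = i) ∧ G.Adj p.1 p.2 <;>
      by_cases h2 : (p.1 = j ∨ p.2 = j) ∧ G.Adj p.1 p.2 <;>
      simp [h1, h2, RCLike.inner_apply]
  by_cases hadj : G.Adj i j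
  · have key2 : (inner ℂ (f i) (f j) : ℂ) = 2 := by
      rw [key]
      have : ∀ p : V × V, (((p.1 = i ∨ p.2 = i) ∧ G.Adj p.1 p.2) ∧
          ((p.1 = j ∨ p.2 = j) ∧ G.Adj p.1 p.2)) ↔ (p = (i,j) ∨ p = (j,i)) := by
        rintro ⟨a, b⟩
        constructor
        · rintro ⟨⟨h1, hab⟩, ⟨h2, -⟩⟩
          rcases h1 with h1 | h1 <;> rcases h2 with h2 | h2
          · exact absurd (h1.symm.trans h2) hij
          · exact Or.inl (Prod.ext_iff.mpr ⟨h1, h2⟩)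
          · exact Or.inr (Prod.ext_iff.mpr ⟨h2, h1⟩)
          · exact absurd (h1.symm.trans h2) hij
        · rintro (h | h) <;> (rw [Prod.ext_iff] at h; obtain ⟨h1, h2⟩ := h)
          · exact ⟨⟨Or.inl h1, by rw [h1, h2]; exact hadj⟩, ⟨Or.inr h2, by rw [h1, h2]; exact hadj⟩⟩
          · exact ⟨⟨Or.inr h2, by rw [h1, h2]; exact hadj.symm⟩,
              ⟨Or.inl h1, by rw [h1, h2]; exact hadj.symm⟩⟩
      simp only [this]
      have hne : ((i,j) : V × V) ≠ (j,i) := fun h => hij (congrArg Prod.fst h)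
      rw [show (fun p : V × V => if p = (i,j) ∨ p = (j,i) then (1:ℂ) else 0) = fun p =>
        (if p = (i,j) then (1:ℂ) else 0) + (if p = (j,i) then 1 else 0) from ?_]
      · rw [Finset.sum_add_distrib, Finset.sum_ite_eq' , Finset.sum_ite_eq']
        norm_num
      · funext p
        by_cases hp1 : p = (i,j) <;> by_cases hp2 : p = (j,i) <;>
          simp_all
    rw [key2]; simpa using hadj
  · have key2 : (inner ℂ (f i) (f j) : ℂ) = 0 := by
      rw [key]
      refine Finset.sum_eq_zero (fun p _ => ?_)
      rw [if_neg]
      rintro ⟨⟨h1, hab⟩, ⟨h2, -⟩⟩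
      rcases h1 with h1 | h1 <;> rcases h2 with h2 | h2
      · exact hij (h1.symm.trans h2)
      · exact hadj (h1 ▸ h2 ▸ hab)
      · exact hadj (h1 ▸ h2 ▸ hab).symm
      · exact hij (h1.symm.trans h2)
    rw [key2]; simpa using hadj


end GramAux

noncomputable def euclEmbed {a D : ℕ} (h : a ≤ D) :
    EuclideanSpace ℂ (Fin a) →ₗᵢ[ℂ] EuclideanSpace ℂ (Fin D) := by
  refine LinearMap.isometryOfInner
    { toFun := fun x => WithLp.toLp 2 (fun k : Fin D => if hk : k.1 < a then x ⟨k.1, hk⟩ else 0)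
      map_add' := by
        intro x y; ext k; by_cases hk : k.1 < a <;> simp [hk]
      map_smul' := by
        intro c x; ext k; by_cases hk : k.1 < a <;> simp [hk] } ?_
  intro x y
  simp only [LinearMap.coe_mk, AddHom.coe_mk, PiLp.inner_apply, RCLike.inner_apply']
  calc ∑ k : Fin D, (starRingEnd ℂ) (if hk : k.1 < a then x ⟨k.1, hk⟩ else 0) *
        (if hk : k.1 < a then y ⟨k.1, hk⟩ else 0)
      = ∑ k : Fin D, (if hk : k.1 < a then (starRingEnd ℂ) (x ⟨k.1, hk⟩) * y ⟨k.1, hk⟩ else 0) := by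
        refine Finset.sum_congr rfl (fun k _ => ?_)
        by_cases hk : k.1 < a <;> simp [hk]
    _ = ∑ k ∈ Finset.range D, (if hk : k < a then (starRingEnd ℂ) (x ⟨k, hk⟩) * y ⟨k, hk⟩ else 0) := by
        rw [Finset.sum_range fun k => _]
    _ = ∑ k ∈ Finset.range a, (if hk : k < a then (starRingEnd ℂ) (x ⟨k, hk⟩) * y ⟨k, hk⟩ else 0) := by
        refine (Finset.sum_subset (Finset.range_subset_range.mpr h) ?_).symm
        intro k _ hk
        rw [Finset.mem_range] at hk
        simp [hk]
    _ = ∑ k : Fin a, (starRingEnd ℂ) (x k) * y k := by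
        rw [Finset.sum_range fun k => _]
        refine Finset.sum_congr rfl (fun k _ => ?_)
        simp [k.isLt]


section Phase

variable {E : Type*} [NormedAddCommGroup E] [InnerProductSpace ℂ E]

noncomputable def projL (u : E) : E →ₗ[ℂ] E where
  toFun w := ((inner ℂ u w : ℂ) / ((‖u‖ : ℂ)^2)) • u
  map_add' x y := by
    show ((inner ℂ u (x + y) : ℂ) / _) • u = _
    rw [inner_add_right, add_div, add_smul]
  map_smul' c x := by
    show ((inner ℂ u (c • x) : ℂ) / _) • u = _
    rw [inner_smul_right, mul_div_assoc, mul_smul]; rfl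

lemma projL_apply (u w : E) : projL u w = ((inner ℂ u w : ℂ) / ((‖u‖ : ℂ)^2)) • u := rfl

lemma normsq_ne_zero {u : E} (hu : u ≠ 0) : ((‖u‖ : ℂ)^2) ≠ 0 := by
  simp [pow_eq_zero_iff, hu, norm_eq_zero]

lemma inner_projL_self (u : E) (hu : u ≠ 0) (w : E) :
    (inner ℂ u (projL u w) : ℂ) = inner ℂ u w := by
  rw [projL_apply, inner_smul_right, inner_self_eq_norm_sq_to_K (𝕜 := ℂ)]
  exact div_mul_cancel₀ _ (normsq_ne_zero hu)

lemma projL_projL (u : E) (hu : u ≠ 0) (w : E) : projL u (projL u w) = projL u w := by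
  rw [projL_apply u (projL u w), inner_projL_self u hu, ← projL_apply]

noncomputable def phaseL (u : E) (c : ℂ) : E →ₗ[ℂ] E := LinearMap.id + (c - 1) • projL u

lemma phaseL_apply (u : E) (c : ℂ) (w : E) : phaseL u c w = w + (c - 1) • projL u w := rfl

lemma phaseL_one (u : E) : phaseL u 1 = LinearMap.id := by
  ext w; simp [phaseL_apply]

lemma phaseL_comp (u : E) (hu : u ≠ 0) (c c' : ℂ) (w : E) :
    phaseL u c (phaseL u c' w) = phaseL u (c * c') w := by
  simp only [phaseL_apply, map_add, map_smul, projL_projL u hu, smul_add, smul_smul]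
  have : c * c' - 1 = (c' - 1) + ((c - 1) + (c-1)*(c'-1)) := by ring
  rw [this, add_smul, add_smul]
  module

lemma inner_phaseL (u : E) (c : ℂ) (v w : E) :
    (inner ℂ v (phaseL u c w) : ℂ) =
      inner ℂ v w + (c - 1) * ((inner ℂ u w : ℂ) / ((‖u‖:ℂ)^2)) * inner ℂ v u := by
  rw [phaseL_apply, inner_add_right, inner_smul_right, projL_apply, inner_smul_right]
  ring

lemma phaseL_isometry (u : E) (hu : u ≠ 0) (c : ℂ) (hc : ‖c‖ = 1) (v w : E) :
    (inner ℂ (phaseL u c v) (phaseL u c w) : ℂ) = inner ℂ v w := by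
  have hcc : (starRingEnd ℂ) c * c = 1 := by
    rw [← Complex.normSq_eq_conj_mul_self, Complex.normSq_eq_norm_sq, hc]
    norm_num
  have hn := normsq_ne_zero hu
  rw [phaseL_apply u c v, inner_add_left, inner_smul_left, inner_phaseL, inner_phaseL,
    projL_apply]
  rw [show (inner ℂ v u : ℂ) = (starRingEnd ℂ) (inner ℂ u v : ℂ) from (inner_conj_symm _ _).symm]
  simp only [inner_smul_left, inner_smul_right, inner_self_eq_norm_sq_to_K (𝕜 := ℂ),
    map_div₀, map_sub, map_one, map_pow, Complex.conj_ofReal, map_mul]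
  field_simp
  ring_nf
  rw [inner_conj_symm]
  linear_combination ((inner ℂ u w : ℂ) * inner ℂ v u * (‖u‖ : ℂ) ^ 2) * hcc

lemma conj_mul_self_one {c : ℂ} (hc : ‖c‖ = 1) : (starRingEnd ℂ) c * c = 1 := by
  rw [← Complex.normSq_eq_conj_mul_self, Complex.normSq_eq_norm_sq, hc]
  norm_num

noncomputable def phaseRot (u : E) (hu : u ≠ 0) (c : ℂ) (hc : ‖c‖ = 1) : E ≃ₗᵢ[ℂ] E :=
  LinearEquiv.isometryOfInner
    (LinearEquiv.ofLinear (phaseL u c) (phaseL u ((starRingEnd ℂ) c))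
      (by ext w
          simp only [LinearMap.coe_comp, Function.comp_apply, LinearMap.id_coe, id_eq]
          rw [phaseL_comp u hu, mul_comm, conj_mul_self_one hc, phaseL_one]; rfl)
      (by ext w
          simp only [LinearMap.coe_comp, Function.comp_apply, LinearMap.id_coe, id_eq]
          rw [phaseL_comp u hu, conj_mul_self_one hc, phaseL_one]; rfl))
    (phaseL_isometry u hu c hc)

lemma phaseRot_apply (u : E) (hu : u ≠ 0) (c : ℂ) (hc : ‖c‖ = 1) (w : E) :
    phaseRot u hu c hc w = w + ((c - 1) * ((inner ℂ u w : ℂ) / ((‖u‖:ℂ)^2))) • u := by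
  show phaseL u c w = _
  rw [phaseL_apply, projL_apply, smul_smul]

noncomputable def cfun (t : ℝ) : ℂ := Complex.exp ((t : ℂ) * Complex.I)

lemma cfun_zero : cfun 0 = 1 := by simp [cfun]

lemma cfun_norm (t : ℝ) : ‖cfun t‖ = 1 := by
  rw [cfun, Complex.norm_exp]
  simp [Complex.mul_re]

lemma cfun_continuous : Continuous cfun :=
  Complex.continuous_exp.comp (Complex.continuous_ofReal.mul continuous_const)

lemma cfun_ne_one {t : ℝ} (ht : t ∈ Set.Ioo (0:ℝ) 1) : cfun t ≠ 1 := by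
  intro h
  rw [cfun, Complex.exp_eq_one_iff] at h
  obtain ⟨n, hn⟩ := h
  have h2 : (t : ℂ) * Complex.I = ((n : ℂ) * (2 * (Real.pi : ℂ))) * Complex.I := hn.trans (by ring)
  have h3 := mul_right_cancel₀ Complex.I_ne_zero h2
  have ht' : t = (n : ℝ) * (2 * Real.pi) := by exact_mod_cast h3
  obtain ⟨ht0, ht1⟩ := ht
  have hpi := Real.pi_gt_three
  rcases lt_trichotomy (n : ℝ) 0 with h | h | h
  · nlinarith
  · rw [h] at ht'; simp at ht'; nlinarith
  · have : (1:ℝ) ≤ (n:ℝ) := by exact_mod_cast (by exact_mod_cast h : 0 < n)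
    nlinarith

lemma phaseL_one_apply (u w : E) : phaseL u 1 w = w := by rw [phaseL_one]; rfl

lemma phaseRot_coe (u : E) (hu : u ≠ 0) (c : ℂ) (hc : ‖c‖ = 1) (w : E) :
    phaseRot u hu c hc w = phaseL u c w := rfl

section KeyRotation

variable [FiniteDimensional ℂ E] {p q : ℕ}

lemma key_rotation (x : Fin p → E) (y : Fin q → E)
    (hx : ∀ i, x i ≠ 0) (hy : ∀ j, y j ≠ 0)
    (hdim : Module.finrank ℂ E ≤ Module.finrank ℂ (Submodule.span ℂ (Set.range x)) +
      Module.finrank ℂ (Submodule.span ℂ (Set.range y))) :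
    ∃ U : E ≃ₗᵢ[ℂ] E,
      (Submodule.span ℂ (Set.range x) ⊔
        Submodule.span ℂ (Set.range fun j => U (y j)) = ⊤) ∧
      ∀ i j, (inner ℂ (x i) (U (y j)) : ℂ) ≠ 0 := by
  classical
  set D := Module.finrank ℂ E with hD
  set X := Submodule.span ℂ (Set.range x) with hX
  let Y : (E ≃ₗᵢ[ℂ] E) → Submodule ℂ E := fun U => Submodule.span ℂ (Set.range fun j => U (y j))
  let bad : (E ≃ₗᵢ[ℂ] E) → Finset (Fin p × Fin q) := fun U =>
    Finset.univ.filter fun ij => (inner ℂ (x ij.1) (U (y ij.2)) : ℂ) = 0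
  let defect : (E ≃ₗᵢ[ℂ] E) → ℕ := fun U =>
    (D - Module.finrank ℂ ↥(X ⊔ Y U)) + (bad U).card
  have final : ∀ U : E ≃ₗᵢ[ℂ] E, defect U = 0 →
      (X ⊔ Y U = ⊤ ∧ ∀ i j, (inner ℂ (x i) (U (y j)) : ℂ) ≠ 0) := by
    intro U h0
    simp only [defect] at h0
    have h1 : D - Module.finrank ℂ ↥(X ⊔ Y U) = 0 := by omega
    have h2 : (bad U).card = 0 := by omega
    constructor
    · have hle : Module.finrank ℂ ↥(X ⊔ Y U) ≤ D := Submodule.finrank_le _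
      have hge : D ≤ Module.finrank ℂ ↥(X ⊔ Y U) := by omega
      exact Submodule.eq_top_of_finrank_eq (le_antisymm hle hge)
    · intro i j hc
      have hmem : (i, j) ∈ bad U := Finset.mem_filter.mpr ⟨Finset.mem_univ _, hc⟩
      rw [Finset.card_eq_zero] at h2
      rw [h2] at hmem
      exact absurd hmem (Finset.notMem_empty _)
  have step : ∀ U : E ≃ₗᵢ[ℂ] E, 0 < defect U → ∃ U', defect U' < defect U := by
    intro U hpos
    -- the good set
    set goodset : Finset (Fin p × Fin q) :=
      Finset.univ.filter (fun ij => (inner ℂ (x ij.1) (U (y ij.2)) : ℂ) ≠ 0) with hgoodset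
    -- eventual preservation of good pairs
    have evgood : ∀ u : E, ∀ᶠ t in nhdsWithin 0 (Set.Ioi (0:ℝ)),
        ∀ ij ∈ goodset, (inner ℂ (x ij.1) (phaseL u (cfun t) (U (y ij.2))) : ℂ) ≠ 0 := by
      intro u
      rw [Filter.eventually_all_finset]
      intro ij hij
      rw [hgoodset, Finset.mem_filter] at hij
      apply Filter.Eventually.filter_mono nhdsWithin_le_nhds
      have hcont : Continuous fun t : ℝ =>
          (inner ℂ (x ij.1) (phaseL u (cfun t) (U (y ij.2))) : ℂ) := by
        simp only [inner_phaseL]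
        exact continuous_const.add
          (((cfun_continuous.sub continuous_const).mul continuous_const).mul continuous_const)
      have h00 : (inner ℂ (x ij.1) (phaseL u (cfun 0) (U (y ij.2))) : ℂ) ≠ 0 := by
        rw [cfun_zero, phaseL_one_apply]
        exact hij.2
      exact hcont.continuousAt.eventually_ne h00
    have ev3 : ∀ᶠ t in nhdsWithin 0 (Set.Ioi (0:ℝ)), cfun t ≠ 1 :=
      Filter.eventually_of_mem (Ioo_mem_nhdsGT_of_mem ⟨le_refl (0:ℝ), one_pos⟩)
        (fun t ht => cfun_ne_one ht)
    -- a uniform description of Y (U.trans (phaseRot ...))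
    have hYmap : ∀ (u : E) (hu : u ≠ 0) (c : ℂ) (hc : ‖c‖ = 1),
        Y (U.trans (phaseRot u hu c hc)) = Submodule.map (phaseL u c) (Y U) := by
      intro u hu c hc
      show Submodule.span ℂ _ = _
      rw [show (Set.range fun j => (U.trans (phaseRot u hu c hc)) (y j))
          = (phaseL u c) '' (Set.range fun j => U (y j)) from by
        rw [← Set.range_comp]; rfl]
      rw [Submodule.span_image]
    by_cases hbad : (bad U).Nonempty
    · -- CASE A : fix a bad pair
      obtain ⟨⟨i₀, j₀⟩, hmem⟩ := hbad
      have h0 : (inner ℂ (x i₀) (U (y j₀)) : ℂ) = 0 := (Finset.mem_filter.mp hmem).2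
      set xx := x i₀ with hxxdef
      set w := U (y j₀) with hwdef
      have hxx0 : xx ≠ 0 := hx i₀
      have hw0 : w ≠ 0 := by
        simp only [hwdef, ne_eq, EmbeddingLike.map_eq_zero_iff]
        exact hy j₀
      have hnx : ((‖xx‖ : ℂ)) ≠ 0 := by simpa [norm_eq_zero] using hxx0
      have hnw : ((‖w‖ : ℂ)) ≠ 0 := by simpa [norm_eq_zero] using hw0
      set u := ((‖xx‖ : ℂ))⁻¹ • xx + ((‖w‖ : ℂ))⁻¹ • w with hudef
      have hxu : (inner ℂ xx u : ℂ) = ‖xx‖ := by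
        rw [hudef, inner_add_right, inner_smul_right, inner_smul_right, h0,
          inner_self_eq_norm_sq_to_K (𝕜 := ℂ)]
        field_simp
        rw [RCLike.ofReal_eq_complex_ofReal]
        ring
      have huw : (inner ℂ u w : ℂ) = ‖w‖ := by
        rw [hudef, inner_add_left, inner_smul_left, inner_smul_left, h0,
          inner_self_eq_norm_sq_to_K (𝕜 := ℂ)]
        simp only [Complex.conj_ofReal, map_inv₀]
        field_simp
        rw [RCLike.ofReal_eq_complex_ofReal]
        ring
      have hu0 : u ≠ 0 := by
        intro h
        rw [h, inner_zero_right] at hxu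
        exact hnx hxu.symm
      -- the independent family
      have hsum : X ⊔ Y U = Submodule.span ℂ (Set.range (Sum.elim x (fun j => U (y j)))) := by
        rw [Set.Sum.elim_range, Submodule.span_union]
      obtain ⟨s, hs_sub, hs_span, hs_ind⟩ :=
        exists_linearIndependent ℂ (Set.range (Sum.elim x (fun j => U (y j))))
      have hs_fin : s.Finite := (Set.finite_range _).subset hs_sub
      haveI : Fintype s := hs_fin.fintype
      have hσ : ∀ v : s, ∃ k, Sum.elim x (fun j => U (y j)) k = (v : E) := fun v => hs_sub v.2
      choose σ hσ using hσ
      have ev2 : ∀ᶠ t in nhdsWithin 0 (Set.Ioi (0:ℝ)),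
          LinearIndependent ℂ
            (fun v : s => Sum.elim x (fun j => phaseL u (cfun t) (U (y j))) (σ v)) := by
        apply Filter.Eventually.filter_mono nhdsWithin_le_nhds
        have hcont : Continuous (fun t : ℝ =>
            (fun v : s => Sum.elim x (fun j => phaseL u (cfun t) (U (y j))) (σ v))) := by
          apply continuous_pi
          intro v
          rcases hk : σ v with i | j
          · simp only [Sum.elim_inl]; exact continuous_const
          · simp only [Sum.elim_inr, phaseL_apply]
            exact continuous_const.add ((cfun_continuous.sub continuous_const).smul
              continuous_const)
        have h00 : (fun v : s => Sum.elim x (fun j => phaseL u (cfun 0) (U (y j))) (σ v))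
            ∈ {f : s → E | LinearIndependent ℂ f} := by
          have heq : (fun v : s => Sum.elim x (fun j => phaseL u (cfun 0) (U (y j))) (σ v))
              = (fun v : s => (v : E)) := by
            funext v
            rw [cfun_zero, ← hσ v]
            rcases σ v with i | j
            · rfl
            · simp only [Sum.elim_inr, phaseL_one_apply]
          rw [heq]
          exact hs_ind
        exact hcont.continuousAt.eventually_mem (isOpen_setOf_linearIndependent.mem_nhds h00)
      obtain ⟨t, ht1, ht2, ht3⟩ := ((evgood u).and (ev2.and ev3)).exists
      set c := cfun t with hcdef
      have hc : ‖c‖ = 1 := cfun_norm t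
      set U' := U.trans (phaseRot u hu0 c hc) with hU'def
      have hU'app : ∀ v : E, U' v = phaseL u c (U v) := fun v => rfl
      -- the fixed pair becomes good
      have hne0 : (inner ℂ (x i₀) (U' (y j₀)) : ℂ) ≠ 0 := by
        rw [show (inner ℂ (x i₀) (U' (y j₀)) : ℂ) = inner ℂ xx (phaseL u c w) from rfl]
        rw [show (inner ℂ xx (phaseL u c w) : ℂ)
            = (c - 1) * (((‖w‖ : ℂ)) / ((‖u‖:ℂ)^2)) * ((‖xx‖ : ℂ)) from by
          rw [inner_phaseL, h0, huw, hxu]; ring]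
        exact mul_ne_zero (mul_ne_zero (sub_ne_zero.mpr ht3)
          (div_ne_zero hnw (normsq_ne_zero hu0))) hnx
      -- bad set shrinks
      have hsub : bad U' ⊆ (bad U).erase (i₀, j₀) := by
        intro ij hij
        rw [Finset.mem_filter] at hij
        rw [Finset.mem_erase]
        constructor
        · rintro rfl
          exact hne0 hij.2
        · rw [Finset.mem_filter]
          refine ⟨Finset.mem_univ _, ?_⟩
          by_contra hgood
          exact ht1 ij (Finset.mem_filter.mpr ⟨Finset.mem_univ _, hgood⟩) hij.2
      have hcard_lt : (bad U').card < (bad U).card :=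
        lt_of_le_of_lt (Finset.card_le_card hsub) (Finset.card_erase_lt_of_mem hmem)
      -- rank does not decrease
      have hrank : Module.finrank ℂ ↥(X ⊔ Y U) ≤ Module.finrank ℂ ↥(X ⊔ Y U') := by
        have hcard : Module.finrank ℂ ↥(X ⊔ Y U) = Fintype.card s := by
          rw [hsum, ← hs_span, finrank_span_set_eq_card hs_ind, Set.toFinset_card]
        rw [hcard]
        have hfam_le : Submodule.span ℂ (Set.range
            (fun v : s => Sum.elim x (fun j => phaseL u (cfun t) (U (y j))) (σ v)))
            ≤ X ⊔ Y U' := by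
          rw [Submodule.span_le]
          rintro _ ⟨v, rfl⟩
          show Sum.elim x (fun j => phaseL u (cfun t) (U (y j))) (σ v) ∈ _
          rcases σ v with i | j
          · exact Submodule.mem_sup_left (Submodule.subset_span ⟨i, rfl⟩)
          · exact Submodule.mem_sup_right (Submodule.subset_span ⟨j, rfl⟩)
        calc Fintype.card s
            = Module.finrank ℂ ↥(Submodule.span ℂ (Set.range
              (fun v : s => Sum.elim x (fun j => phaseL u (cfun t) (U (y j))) (σ v)))) :=
              (finrank_span_eq_card ht2).symm
          _ ≤ Module.finrank ℂ ↥(X ⊔ Y U') := Submodule.finrank_mono hfam_le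
      refine ⟨U', ?_⟩
      simp only [defect]
      have h1 : D - Module.finrank ℂ ↥(X ⊔ Y U') ≤ D - Module.finrank ℂ ↥(X ⊔ Y U) :=
        Nat.sub_le_sub_left hrank D
      omega
    · -- CASE B : all pairs good, rank deficient
      rw [Finset.not_nonempty_iff_eq_empty] at hbad
      have hrlt : Module.finrank ℂ ↥(X ⊔ Y U) < D := by
        simp only [defect, hbad, Finset.card_empty, add_zero] at hpos
        have := Submodule.finrank_le (X ⊔ Y U)
        omega
      -- rank of Y U
      have hYeq : Y U = Submodule.map (U.toLinearEquiv : E →ₗ[ℂ] E)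
          (Submodule.span ℂ (Set.range y)) := by
        show Submodule.span ℂ _ = _
        rw [← Submodule.span_image]
        congr 1
        rw [← Set.range_comp]; rfl
      have hYr : Module.finrank ℂ ↥(Y U)
          = Module.finrank ℂ ↥(Submodule.span ℂ (Set.range y)) := by
        rw [hYeq, LinearEquiv.finrank_map_eq]
      have hinf : X ⊓ Y U ≠ ⊥ := by
        intro hbot
        have heq := Submodule.finrank_sup_add_finrank_inf_eq X (Y U)
        rw [hbot, finrank_bot, add_zero, hYr] at heq
        omega
      obtain ⟨w, hwmem, hw0⟩ := Submodule.exists_mem_ne_zero_of_ne_bot hinf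
      have hwX : w ∈ X := (Submodule.mem_inf.mp hwmem).1
      have hwY : w ∈ Y U := (Submodule.mem_inf.mp hwmem).2
      have hVne : X ⊔ Y U ≠ ⊤ := by
        intro htop
        rw [htop, finrank_top] at hrlt
        exact lt_irrefl _ hrlt
      have horth : (X ⊔ Y U)ᗮ ≠ ⊥ := fun h => hVne (Submodule.orthogonal_eq_bot_iff.mp h)
      obtain ⟨z, hzmem, hz0⟩ := Submodule.exists_mem_ne_zero_of_ne_bot horth
      have hzperp : ∀ v, v ∈ X ⊔ Y U → (inner ℂ v z : ℂ) = 0 :=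
        fun v hv => (Submodule.mem_orthogonal _ _).mp hzmem v hv
      have hwz : (inner ℂ w z : ℂ) = 0 := hzperp w (Submodule.mem_sup_left hwX)
      have hzw : (inner ℂ z w : ℂ) = 0 := by
        rw [← inner_conj_symm, hwz, map_zero]
      have hnw : ((‖w‖ : ℂ)) ≠ 0 := by simpa [norm_eq_zero] using hw0
      have hnz : ((‖z‖ : ℂ)) ≠ 0 := by simpa [norm_eq_zero] using hz0
      set u := ((‖w‖ : ℂ))⁻¹ • w + ((‖z‖ : ℂ))⁻¹ • z with hudef
      have huw : (inner ℂ u w : ℂ) = ‖w‖ := by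
        rw [hudef, inner_add_left, inner_smul_left, inner_smul_left, hzw,
          inner_self_eq_norm_sq_to_K (𝕜 := ℂ)]
        simp only [Complex.conj_ofReal, map_inv₀]
        field_simp
        rw [RCLike.ofReal_eq_complex_ofReal]
        ring
      have hzu : (inner ℂ z u : ℂ) = ‖z‖ := by
        rw [hudef, inner_add_right, inner_smul_right, inner_smul_right, hzw,
          inner_self_eq_norm_sq_to_K (𝕜 := ℂ)]
        field_simp
        rw [RCLike.ofReal_eq_complex_ofReal]
        ring
      have hu0 : u ≠ 0 := by
        intro h
        rw [h, inner_zero_right] at hzu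
        exact hnz hzu.symm
      have hunotV : u ∉ X ⊔ Y U := by
        intro hmem
        have := hzperp u hmem
        rw [← inner_conj_symm, hzu] at this
        simp only [Complex.conj_ofReal] at this
        exact hnz this
      obtain ⟨t, ht1, ht3⟩ := ((evgood u).and ev3).exists
      set c := cfun t with hcdef
      have hc : ‖c‖ = 1 := cfun_norm t
      set U' := U.trans (phaseRot u hu0 c hc) with hU'def
      have hYU' : Y U' = Submodule.map (phaseL u c) (Y U) := hYmap u hu0 c hc
      -- no pair goes bad
      have hbad' : bad U' = ∅ := by
        rw [Finset.filter_eq_empty_iff]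
        intro ij _
        have hgood : ij ∈ goodset := by
          rw [hgoodset, Finset.mem_filter]
          refine ⟨Finset.mem_univ _, ?_⟩
          intro hzero
          have : ij ∈ bad U := Finset.mem_filter.mpr ⟨Finset.mem_univ _, hzero⟩
          rw [hbad] at this
          exact absurd this (Finset.notMem_empty _)
        exact ht1 ij hgood
      -- strict rank increase
      have hphase : ∀ v : E, phaseL u c v = v + ((c - 1) * ((inner ℂ u v : ℂ) / ((‖u‖:ℂ)^2))) • u := by
        intro v
        rw [phaseL_apply, projL_apply, smul_smul]
      have hscal : (c - 1) * (((‖w‖ : ℂ)) / ((‖u‖:ℂ)^2)) ≠ 0 :=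
        mul_ne_zero (sub_ne_zero.mpr ht3) (div_ne_zero hnw (normsq_ne_zero hu0))
      have huV' : u ∈ X ⊔ Y U' := by
        have hφw : phaseL u c w ∈ Y U' := by
          rw [hYU']
          exact Submodule.mem_map_of_mem hwY
        have hsum_mem : phaseL u c w - w ∈ X ⊔ Y U' :=
          Submodule.sub_mem _ (Submodule.mem_sup_right hφw) (Submodule.mem_sup_left hwX)
        rw [hphase w, huw] at hsum_mem
        simp only [add_sub_cancel_left] at hsum_mem
        have := Submodule.smul_mem (X ⊔ Y U') ((c - 1) * (((‖w‖ : ℂ)) / ((‖u‖:ℂ)^2)))⁻¹ hsum_mem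
        rwa [inv_smul_smul₀ hscal] at this
      have hVle : X ⊔ Y U ≤ X ⊔ Y U' := by
        apply sup_le le_sup_left
        intro v hv
        have hφv : phaseL u c v ∈ Y U' := by
          rw [hYU']
          exact Submodule.mem_map_of_mem hv
        have : v = phaseL u c v - ((c - 1) * ((inner ℂ u v : ℂ) / ((‖u‖:ℂ)^2))) • u := by
          rw [hphase v]; abel
        rw [this]
        exact Submodule.sub_mem _ (Submodule.mem_sup_right hφv)
          (Submodule.smul_mem _ _ huV')
      have hlt : X ⊔ Y U < X ⊔ Y U' := lt_of_le_of_ne hVle (fun h => hunotV (h ▸ huV'))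
      have hfr : Module.finrank ℂ ↥(X ⊔ Y U) < Module.finrank ℂ ↥(X ⊔ Y U') :=
        Submodule.finrank_lt_finrank_of_lt hlt
      refine ⟨U', ?_⟩
      simp only [defect, hbad', hbad, Finset.card_empty, add_zero]
      omega
  -- main induction
  have main : ∀ (N : ℕ) (U : E ≃ₗᵢ[ℂ] E), defect U ≤ N → ∃ U', defect U' = 0 := by
    intro N
    induction N with
    | zero => exact fun U hU => ⟨U, Nat.le_zero.mp hU⟩
    | succ N ih =>
      intro U hU
      by_cases h : defect U = 0
      · exact ⟨U, h⟩
      · obtain ⟨U', hU'⟩ := step U (Nat.pos_of_ne_zero h)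
        exact ih U' (by omega)
  obtain ⟨U, hU⟩ := main (defect (LinearIsometryEquiv.refl ℂ E)) _ le_rfl
  obtain ⟨hU1, hU2⟩ := final U hU
  exact ⟨U, hU1, hU2⟩

end KeyRotation


end Phase

lemma exists_neighbor {V : Type} [Fintype V] {G : SimpleGraph V} (hc : G.Connected)
    (h2 : 1 < Fintype.card V) (v : V) : ∃ u, G.Adj v u := by
  obtain ⟨w, hw⟩ := Fintype.exists_ne_of_one_lt_card h2 v
  obtain ⟨p⟩ := hc.preconnected v w
  exact ⟨p.snd, p.adj_snd (SimpleGraph.Walk.not_nil_of_ne (Ne.symm hw))⟩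

lemma finrank_span_comp {F E' : Type*} [NormedAddCommGroup F] [InnerProductSpace ℂ F]
    [NormedAddCommGroup E'] [InnerProductSpace ℂ E'] (ι : F →ₗᵢ[ℂ] E') {V : Type} (f : V → F) :
    Module.finrank ℂ (Submodule.span ℂ (Set.range fun i => ι (f i))) =
    Module.finrank ℂ (Submodule.span ℂ (Set.range f)) := by
  rw [show (Set.range fun i => ι (f i)) = ι.toLinearMap '' Set.range f from by
    rw [← Set.range_comp]; rfl, Submodule.span_image]
  exact (LinearEquiv.finrank_eq
    (Submodule.equivMapOfInjective ι.toLinearMap ι.injective _)).symm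

end AuxFrame

/-- the join of connected graphs is a frame graph in a complex space of
dimension `d` exactly when `n' ≤ d ≤ n + m`; equivalently
`mr₊^ℂ(G ∨ H) = max (mr₊^ℂ(G)) (mr₊^ℂ(H))`. -/
theorem isFrameGraphIn_joinGraph (n m n' m' : ℕ) (hn : 2 ≤ n) (hm : 2 ≤ m) (hnm : m' ≤ n')
    (G : SimpleGraph (Fin n)) (H : SimpleGraph (Fin m))
    (hGc : G.Connected) (hHc : H.Connected)
    (hG : ∀ d : ℕ, IsFrameGraphIn ℂ G d ↔ n' ≤ d ∧ d ≤ n)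
    (hH : ∀ d : ℕ, IsFrameGraphIn ℂ H d ↔ m' ≤ d ∧ d ≤ m) :
    (∀ d : ℕ, IsFrameGraphIn ℂ (joinGraph G H) d ↔ n' ≤ d ∧ d ≤ n + m) ∧
    mrPlus ℂ (joinGraph G H) = max (mrPlus ℂ G) (mrPlus ℂ H) := by
  classical
  have hn'n : n' ≤ n := by
    obtain ⟨d₀, hd₀⟩ := exists_isFrameGraphIn G
    obtain ⟨h1, h2⟩ := (hG d₀).mp hd₀
    omega
  have hm'm : m' ≤ m := by
    obtain ⟨d₀, hd₀⟩ := exists_isFrameGraphIn H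
    obtain ⟨h1, h2⟩ := (hH d₀).mp hd₀
    omega
  have part1 : ∀ d : ℕ, IsFrameGraphIn ℂ (joinGraph G H) d ↔ n' ≤ d ∧ d ≤ n + m := by
    intro d
    constructor
    · rintro ⟨h, hspan, hpat⟩
      constructor
      · have hpatG : ∀ i j : Fin n, i ≠ j →
            ((inner ℂ (h (Sum.inl i)) (h (Sum.inl j)) : ℂ) ≠ 0 ↔ G.Adj i j) := by
          intro i j hij
          exact hpat (Sum.inl i) (Sum.inl j) (fun hc => hij (Sum.inl.inj hc))
        have hfr := isFrameGraphIn_of_family G (fun i => h (Sum.inl i)) hpatG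
        obtain ⟨h1, -⟩ := (hG _).mp hfr
        have h2 : Module.finrank ℂ
            ↥(Submodule.span ℂ (Set.range fun i => h (Sum.inl i))) ≤ d := by
          have := Submodule.finrank_le (Submodule.span ℂ (Set.range fun i => h (Sum.inl i)))
          rwa [finrank_euclideanSpace_fin] at this
        omega
      · have h3 : Module.finrank ℂ ↥(Submodule.span ℂ (Set.range h))
            ≤ Fintype.card (Fin n ⊕ Fin m) := finrank_range_le_card h
        rw [hspan, finrank_top, finrank_euclideanSpace_fin] at h3
        simpa using h3
    · rintro ⟨hd1, hd2⟩
      set a := min d n with hadef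
      have ha1 : n' ≤ a := le_min hd1 hn'n
      have ha2 : a ≤ n := min_le_right d n
      have ha3 : a ≤ d := min_le_left d n
      set b := max (d - n) m' with hbdef
      have hb1 : m' ≤ b := le_max_right _ _
      have hb2 : b ≤ m := max_le (by omega) hm'm
      have hb3 : b ≤ d := max_le (by omega) (by omega)
      have hab : d ≤ a + b := by
        have h1 := le_max_left (d - n) m'
        rcases le_total d n with hdn | hdn
        · have : a = d := min_eq_left hdn
          omega
        · have : a = n := min_eq_right hdn
          omega
      obtain ⟨f, hfspan, hfpat⟩ := (hG a).mpr ⟨ha1, ha2⟩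
      obtain ⟨g, hgspan, hgpat⟩ := (hH b).mpr ⟨hb1, hb2⟩
      set ι₁ : EuclideanSpace ℂ (Fin a) →ₗᵢ[ℂ] EuclideanSpace ℂ (Fin d) := euclEmbed ha3
        with hι₁
      set ι₂ : EuclideanSpace ℂ (Fin b) →ₗᵢ[ℂ] EuclideanSpace ℂ (Fin d) := euclEmbed hb3
        with hι₂
      set xv : Fin n → EuclideanSpace ℂ (Fin d) := fun i => ι₁ (f i) with hxv
      set yv : Fin m → EuclideanSpace ℂ (Fin d) := fun j => ι₂ (g j) with hyv
      have hx0 : ∀ i, xv i ≠ 0 := by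
        intro i hzero
        obtain ⟨j, hj⟩ := exists_neighbor hGc (by simpa using (show 1 < n from hn)) i
        have hfi : f i = 0 := ι₁.injective (by rw [map_zero]; exact hzero)
        exact (hfpat i j (G.ne_of_adj hj)).mpr hj (by rw [hfi, inner_zero_left])
      have hy0 : ∀ j, yv j ≠ 0 := by
        intro j hzero
        obtain ⟨i, hi⟩ := exists_neighbor hHc (by simpa using (show 1 < m from hm)) j
        have hgj : g j = 0 := ι₂.injective (by rw [map_zero]; exact hzero)
        exact (hgpat j i (H.ne_of_adj hi)).mpr hi (by rw [hgj, inner_zero_left])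
      have hfrx : Module.finrank ℂ ↥(Submodule.span ℂ (Set.range xv)) = a := by
        rw [hxv, finrank_span_comp ι₁ f, hfspan, finrank_top, finrank_euclideanSpace_fin]
      have hfry : Module.finrank ℂ ↥(Submodule.span ℂ (Set.range yv)) = b := by
        rw [hyv, finrank_span_comp ι₂ g, hgspan, finrank_top, finrank_euclideanSpace_fin]
      obtain ⟨U, hUspan, hUinner⟩ := key_rotation xv yv hx0 hy0 (by
        rw [hfrx, hfry, finrank_euclideanSpace_fin]; exact hab)
      refine ⟨Sum.elim xv (fun j => U (yv j)), ?_, ?_⟩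
      · rw [Set.Sum.elim_range, Submodule.span_union]
        exact hUspan
      · rintro (i | i) (j | j) hij
        · have hij' : i ≠ j := fun hc => hij (by rw [hc])
          have hinner : (inner ℂ (xv i) (xv j) : ℂ) = inner ℂ (f i) (f j) :=
            ι₁.inner_map_map (f i) (f j)
          show (inner ℂ (xv i) (xv j) : ℂ) ≠ 0 ↔ G.Adj i j
          rw [hinner]
          exact hfpat i j hij'
        · show (inner ℂ (xv i) (U (yv j)) : ℂ) ≠ 0 ↔ True
          exact iff_of_true (hUinner i j) trivial
        · show (inner ℂ (U (yv i)) (xv j) : ℂ) ≠ 0 ↔ True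
          refine iff_of_true ?_ trivial
          rw [← inner_conj_symm]
          simpa only [ne_eq, map_eq_zero] using hUinner j i
        · have hij' : i ≠ j := fun hc => hij (by rw [hc])
          have hinner : (inner ℂ (U (yv i)) (U (yv j)) : ℂ) = inner ℂ (g i) (g j) := by
            rw [U.inner_map_map, hyv]
            exact ι₂.inner_map_map (g i) (g j)
          show (inner ℂ (U (yv i)) (U (yv j)) : ℂ) ≠ 0 ↔ H.Adj i j
          rw [hinner]
          exact hgpat i j hij'
  refine ⟨part1, ?_⟩
  have hmr : ∀ {W : Type} [Fintype W] [DecidableEq W] (K : SimpleGraph W) (lo hi : ℕ),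
      lo ≤ hi → (∀ d : ℕ, IsFrameGraphIn ℂ K d ↔ lo ≤ d ∧ d ≤ hi) → mrPlus ℂ K = lo := by
    intro W _ _ K lo hi hle hiff
    have hseteq : {r : ℕ | ∃ A : Matrix W W ℂ, A.PosSemidef ∧
        (∀ i j : W, i ≠ j → (A i j ≠ 0 ↔ K.Adj i j)) ∧ A.rank = r}
        = {d : ℕ | lo ≤ d ∧ d ≤ hi} := by
      ext r
      constructor
      · intro hr
        exact (hiff r).mp (gram_bwd K r hr)
      · intro hr
        exact gram_fwd K r ((hiff r).mpr hr)
    rw [mrPlus, hseteq]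
    have hne : ({d : ℕ | lo ≤ d ∧ d ≤ hi}).Nonempty := ⟨lo, le_rfl, hle⟩
    have hmem := Nat.sInf_mem hne
    have hlb := Nat.sInf_le (show lo ∈ {d : ℕ | lo ≤ d ∧ d ≤ hi} from ⟨le_rfl, hle⟩)
    exact le_antisymm hlb hmem.1
  rw [hmr G n' n hn'n hG, hmr H m' m hm'm hH,
    hmr (joinGraph G H) n' (n + m) (by omega) part1]
  omega
end

section
/- Let G be a connected graph on n ≥ 2 vertices and H a connected graph on m ≥ 2 vertices. Then max{n·OS(H), m·OS(G)} ≤ OS(G □ H), where G □ H is the Cartesian product of G and H. -/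
open scoped ComplexOrder

section Aux

open SimpleGraph

/-- Transfer reachability in induced subgraphs along a map that sends edges to
edges-or-equalities. -/
lemma reachable_induce_map {V V' : Type} {A : SimpleGraph V} {B : SimpleGraph V'}
    {S : Set V} {T : Set V'} (f : V → V') (hmem : ∀ x ∈ S, f x ∈ T)
    (hadj : ∀ x y : V, A.Adj x y → f x = f y ∨ B.Adj (f x) (f y)) :
    ∀ {a b : S}, (A.induce S).Reachable a b →
      (B.induce T).Reachable ⟨f a, hmem a a.2⟩ ⟨f b, hmem b b.2⟩ := by
  intro a b h
  obtain ⟨p⟩ := h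
  induction p with
  | nil => exact SimpleGraph.Reachable.refl _
  | @cons u c d h q ih =>
    have hA : A.Adj (u : V) (c : V) := h
    rcases hadj _ _ hA with heq | hBadj
    · have : (⟨f u, hmem u u.2⟩ : T) = ⟨f c, hmem c c.2⟩ := Subtype.ext heq
      rw [this]; exact ih
    · exact SimpleGraph.Reachable.trans
        (SimpleGraph.Adj.reachable (show (B.induce T).Adj ⟨f u, hmem u u.2⟩ ⟨f c, hmem c c.2⟩
          from hBadj)) ih

lemma osSet_zero_mem {V : Type} (G : SimpleGraph V) :
    0 ∈ {m : ℕ | ∃ v : Fin m → V, IsOSSet G v} :=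
  ⟨fun i => i.elim0, fun i => i.elim0, fun k => k.elim0⟩

lemma osSet_bddAbove {V : Type} [Fintype V] (G : SimpleGraph V) :
    BddAbove {m : ℕ | ∃ v : Fin m → V, IsOSSet G v} := by
  refine ⟨Fintype.card V, fun t ht => ?_⟩
  obtain ⟨v, hv, -⟩ := ht
  simpa using Fintype.card_le_of_injective v hv

lemma exists_osSet {V : Type} [Fintype V] (G : SimpleGraph V) :
    ∃ v : Fin (OSNumber G) → V, IsOSSet G v :=
  Nat.sSup_mem ⟨0, osSet_zero_mem G⟩ (osSet_bddAbove G)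

lemma key_osSet {n m : ℕ} (hn : 0 < n) (G : SimpleGraph (Fin n)) (H : SimpleGraph (Fin m))
    {s : ℕ} (w : Fin s → Fin m) (hw : IsOSSet H w) :
    ∃ v : Fin (s * n) → Fin n × Fin m, IsOSSet (G □ H) v := by
  have hdiv : ∀ i : Fin (s * n), i.val / n < s := fun i =>
    (Nat.div_lt_iff_lt_mul hn).mpr i.isLt
  refine ⟨fun i => (⟨i.val % n, Nat.mod_lt _ hn⟩, w ⟨i.val / n, hdiv i⟩), ?_, ?_⟩
  · intro i j hij
    have h1 : i.val % n = j.val % n := congrArg (fun p => (Prod.fst p).val) hij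
    have h2 : i.val / n = j.val / n :=
      congrArg Fin.val (hw.1 (congrArg Prod.snd hij))
    have e1 := Nat.div_add_mod i.val n
    have e2 := Nat.div_add_mod j.val n
    apply Fin.ext
    rw [← e1, ← e2, h1, h2]
  · intro i
    obtain ⟨x, hxadj, hxne, hxr⟩ := hw.2 ⟨i.val / n, hdiv i⟩
    refine ⟨(⟨i.val % n, Nat.mod_lt _ hn⟩, x),
      SimpleGraph.boxProd_adj.mpr (Or.inr ⟨hxadj, rfl⟩), ?_, ?_⟩
    · rintro l hl heq
      exact hxne ⟨l.val / n, hdiv l⟩ (Fin.mk_le_mk.mpr (Nat.div_le_div_right hl))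
        (congrArg Prod.snd heq)
    · rintro l hl hreach hadj
      rcases SimpleGraph.boxProd_adj.mp hadj with ⟨hG, h2⟩ | ⟨hH, h1⟩
      · exact hxne ⟨l.val / n, hdiv l⟩ (Fin.mk_le_mk.mpr (Nat.div_le_div_right hl.le)) h2
      · have hmodeq : i.val % n = l.val % n := congrArg Fin.val h1
        have hdle : l.val / n ≤ i.val / n := Nat.div_le_div_right hl.le
        have hdne : l.val / n ≠ i.val / n := by
          intro h
          refine absurd (Fin.ext ?_ : l = i) (ne_of_lt hl)
          rw [← Nat.div_add_mod l.val n, ← Nat.div_add_mod i.val n, h, hmodeq]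
        have hdlt : l.val / n < i.val / n := lt_of_le_of_ne hdle hdne
        refine hxr ⟨l.val / n, hdiv l⟩ (Fin.mk_lt_mk.mpr hdlt) ?_ hH
        exact reachable_induce_map (A := G □ H) (B := H) Prod.snd
          (by rintro y ⟨l', hl', rfl⟩
              exact ⟨⟨l'.val / n, hdiv l'⟩, Fin.mk_le_mk.mpr (Nat.div_le_div_right hl'), rfl⟩)
          (by intro a b hab
              rcases SimpleGraph.boxProd_adj.mp hab with ⟨_, h⟩ | ⟨h, _⟩
              · exact Or.inl h
              · exact Or.inr h) hreach

lemma mul_osNumber_le {n m : ℕ} (hn : 0 < n) (G : SimpleGraph (Fin n))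
    (H : SimpleGraph (Fin m)) : n * OSNumber H ≤ OSNumber (G □ H) := by
  obtain ⟨w, hw⟩ := exists_osSet H
  obtain ⟨v, hv⟩ := key_osSet hn G H w hw
  rw [mul_comm]
  exact le_csSup (osSet_bddAbove _) ⟨v, hv⟩

lemma osSet_swap {n m : ℕ} (G : SimpleGraph (Fin n)) (H : SimpleGraph (Fin m)) {s : ℕ}
    (v : Fin s → Fin n × Fin m) (hv : IsOSSet (G □ H) v) :
    IsOSSet (H □ G) (fun i => (v i).swap) := by
  obtain ⟨hinj, hmain⟩ := hv
  refine ⟨fun i j hij => hinj (Prod.swap_injective hij), ?_⟩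
  intro k
  obtain ⟨x, hxadj, hxne, hxr⟩ := hmain k
  refine ⟨x.swap, ?_, ?_, ?_⟩
  · rcases SimpleGraph.boxProd_adj.mp hxadj with ⟨h1, h2⟩ | ⟨h1, h2⟩
    · exact SimpleGraph.boxProd_adj.mpr (Or.inr ⟨h1, h2⟩)
    · exact SimpleGraph.boxProd_adj.mpr (Or.inl ⟨h1, h2⟩)
  · intro l hl heq
    exact hxne l hl (Prod.swap_injective heq)
  · intro l hl hreach hadj
    refine hxr l hl ?_ ?_
    · have := reachable_induce_map
        (A := H □ G) (B := G □ H)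
        (S := {y : Fin m × Fin n | ∃ l' : Fin s, l' ≤ k ∧ y = (v l').swap})
        (T := {y : Fin n × Fin m | ∃ l' : Fin s, l' ≤ k ∧ y = v l'})
        Prod.swap
        (by rintro y ⟨l', hl', rfl⟩; exact ⟨l', hl', (Prod.swap_swap _).symm⟩)
        (by intro a b hab
            rcases SimpleGraph.boxProd_adj.mp hab with ⟨h1, h2⟩ | ⟨h1, h2⟩
            · exact Or.inr (SimpleGraph.boxProd_adj.mpr (Or.inr ⟨h1, h2⟩))
            · exact Or.inr (SimpleGraph.boxProd_adj.mpr (Or.inl ⟨h1, h2⟩))) hreach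
      simpa [Prod.swap_swap] using this
    · rcases SimpleGraph.boxProd_adj.mp hadj with ⟨h1, h2⟩ | ⟨h1, h2⟩
      · exact SimpleGraph.boxProd_adj.mpr (Or.inr ⟨h1, h2⟩)
      · exact SimpleGraph.boxProd_adj.mpr (Or.inl ⟨h1, h2⟩)

end Aux

/-- `max {n·OS(H), m·OS(G)} ≤ OS(G □ H)` for connected graphs `G`, `H`. -/
theorem osNumber_boxProd_lower_bound (n m : ℕ) (hn : 2 ≤ n) (hm : 2 ≤ m)
    (G : SimpleGraph (Fin n)) (H : SimpleGraph (Fin m))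
    (hGc : G.Connected) (hHc : H.Connected) :
    max (n * OSNumber H) (m * OSNumber G) ≤ OSNumber (G □ H) := by
  
  refine max_le (mul_osNumber_le (by omega) G H) ?_
  refine le_trans (mul_osNumber_le (by omega) H G) ?_
  refine csSup_le_csSup (osSet_bddAbove _) ⟨0, osSet_zero_mem _⟩ ?_
  rintro t ⟨v, hv⟩
  exact ⟨fun i => (v i).swap, osSet_swap H G v hv⟩
end

section
/- Let G be a graph on n vertices and H a graph on m vertices (each with at least 2 vertices). Then mr_+^R(G □ H) ≤ m·mr_+^R(G) + n·mr_+^R(H) − mr_+^R(G)·mr_+^R(H). -/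
open scoped ComplexOrder

open Matrix
open scoped Kronecker

variable {n m : ℕ}

lemma kron_conjT (A : Matrix (Fin n) (Fin n) ℝ) (B : Matrix (Fin m) (Fin m) ℝ) :
    (A ⊗ₖ B)ᴴ = Aᴴ ⊗ₖ Bᴴ := by
  ext i j
  simp [Matrix.conjTranspose_apply, Matrix.kroneckerMap_apply]

lemma card_count (μ : Fin n → ℝ) (ν : Fin m → ℝ) (hμ : ∀ i, 0 ≤ μ i) (hν : ∀ k, 0 ≤ ν k) :
    Fintype.card {p : Fin n × Fin m // μ p.1 + ν p.2 ≠ 0}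
      = n * m - (n - Fintype.card {i // μ i ≠ 0}) * (m - Fintype.card {k // ν k ≠ 0}) := by
  classical
  have h1 : ∀ p : Fin n × Fin m, (μ p.1 + ν p.2 ≠ 0) ↔ ¬(μ p.1 = 0 ∧ ν p.2 = 0) := by
    intro p
    exact not_congr (add_eq_zero_iff_of_nonneg (hμ p.1) (hν p.2))
  simp only [Fintype.card_subtype]
  have h2 : (Finset.univ.filter fun p : Fin n × Fin m => μ p.1 + ν p.2 ≠ 0)
      = Finset.univ.filter fun p : Fin n × Fin m => ¬(μ p.1 = 0 ∧ ν p.2 = 0) := by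
    apply Finset.filter_congr; intro p _; simp [h1 p]
  rw [h2]
  have h3 : (Finset.univ.filter fun p : Fin n × Fin m => ¬(μ p.1 = 0 ∧ ν p.2 = 0)).card
      + (Finset.univ.filter fun p : Fin n × Fin m => (μ p.1 = 0 ∧ ν p.2 = 0)).card
      = n * m := by
    rw [add_comm, Finset.card_filter_add_card_filter_not]
    simp
  have h4 : (Finset.univ.filter fun p : Fin n × Fin m => (μ p.1 = 0 ∧ ν p.2 = 0)).card
      = (Finset.univ.filter fun i : Fin n => μ i = 0).card
        * (Finset.univ.filter fun k : Fin m => ν k = 0).card := by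
    rw [← Finset.univ_product_univ,
      Finset.filter_product (fun i : Fin n => μ i = 0) (fun k : Fin m => ν k = 0),
      Finset.card_product]
  have h5 : (Finset.univ.filter fun i : Fin n => μ i = 0).card
      = n - (Finset.univ.filter fun i : Fin n => μ i ≠ 0).card := by
    have := Finset.card_filter_add_card_filter_not (s := (Finset.univ : Finset (Fin n)))
      (p := fun i => μ i ≠ 0)
    simp only [Finset.card_univ, Fintype.card_fin, not_not] at this
    omega
  have h6 : (Finset.univ.filter fun k : Fin m => ν k = 0).card
      = m - (Finset.univ.filter fun k : Fin m => ν k ≠ 0).card := by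
    have := Finset.card_filter_add_card_filter_not (s := (Finset.univ : Finset (Fin m)))
      (p := fun k => ν k ≠ 0)
    simp only [Finset.card_univ, Fintype.card_fin, not_not] at this
    omega
  rw [h5, h6] at h4
  omega

lemma kron_sum_decomp (A : Matrix (Fin n) (Fin n) ℝ) (B : Matrix (Fin m) (Fin m) ℝ)
    (hA : A.PosSemidef) (hB : B.PosSemidef) :
    (A ⊗ₖ (1 : Matrix (Fin m) (Fin m) ℝ)
        + (1 : Matrix (Fin n) (Fin n) ℝ) ⊗ₖ B).PosSemidef ∧
      (A ⊗ₖ (1 : Matrix (Fin m) (Fin m) ℝ)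
        + (1 : Matrix (Fin n) (Fin n) ℝ) ⊗ₖ B).rank
        = n * m - (n - A.rank) * (m - B.rank) := by
  have hAh := hA.1
  have hBh := hB.1
  set U : Matrix (Fin n) (Fin n) ℝ := (hAh.eigenvectorUnitary : Matrix (Fin n) (Fin n) ℝ) with hUdef
  set V : Matrix (Fin m) (Fin m) ℝ := (hBh.eigenvectorUnitary : Matrix (Fin m) (Fin m) ℝ) with hVdef
  set μ : Fin n → ℝ := hAh.eigenvalues with hμdef
  set ν : Fin m → ℝ := hBh.eigenvalues with hνdef
  have hspecA : A = U * Matrix.diagonal μ * Uᴴ := by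
    have := hAh.spectral_theorem
    simpa [RCLike.ofReal_real_eq_id, Matrix.star_eq_conjTranspose] using this
  have hspecB : B = V * Matrix.diagonal ν * Vᴴ := by
    have := hBh.spectral_theorem
    simpa [RCLike.ofReal_real_eq_id, Matrix.star_eq_conjTranspose] using this
  have hUU : U * Uᴴ = 1 := by
    have := Matrix.mem_unitaryGroup_iff.mp (Matrix.IsHermitian.eigenvectorUnitary hAh).2
    simpa [Matrix.star_eq_conjTranspose] using this
  have hVV : V * Vᴴ = 1 := by
    have := Matrix.mem_unitaryGroup_iff.mp (Matrix.IsHermitian.eigenvectorUnitary hBh).2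
    simpa [Matrix.star_eq_conjTranspose] using this
  have key : A ⊗ₖ (1 : Matrix (Fin m) (Fin m) ℝ) + (1 : Matrix (Fin n) (Fin n) ℝ) ⊗ₖ B
      = (U ⊗ₖ V) * Matrix.diagonal (fun p : Fin n × Fin m => μ p.1 + ν p.2) * (U ⊗ₖ V)ᴴ := by
    calc A ⊗ₖ (1 : Matrix (Fin m) (Fin m) ℝ) + (1 : Matrix (Fin n) (Fin n) ℝ) ⊗ₖ B
        = (U * Matrix.diagonal μ * Uᴴ) ⊗ₖ (V * 1 * Vᴴ)
          + (U * 1 * Uᴴ) ⊗ₖ (V * Matrix.diagonal ν * Vᴴ) := by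
          rw [← hspecA, ← hspecB, mul_one, mul_one, hUU, hVV]
      _ = (U ⊗ₖ V) * (Matrix.diagonal μ ⊗ₖ (1 : Matrix (Fin m) (Fin m) ℝ)) * (Uᴴ ⊗ₖ Vᴴ)
          + (U ⊗ₖ V) * ((1 : Matrix (Fin n) (Fin n) ℝ) ⊗ₖ Matrix.diagonal ν) * (Uᴴ ⊗ₖ Vᴴ) := by
          simp only [Matrix.mul_kronecker_mul]
      _ = (U ⊗ₖ V) * (Matrix.diagonal μ ⊗ₖ (1 : Matrix (Fin m) (Fin m) ℝ)
            + (1 : Matrix (Fin n) (Fin n) ℝ) ⊗ₖ Matrix.diagonal ν) * (U ⊗ₖ V)ᴴ := by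
          rw [kron_conjT, Matrix.mul_add, Matrix.add_mul]
      _ = (U ⊗ₖ V) * Matrix.diagonal (fun p : Fin n × Fin m => μ p.1 + ν p.2) * (U ⊗ₖ V)ᴴ := by
          congr 2
          rw [← Matrix.diagonal_one (n := Fin m), ← Matrix.diagonal_one (n := Fin n),
            Matrix.diagonal_kronecker_diagonal, Matrix.diagonal_kronecker_diagonal,
            Matrix.diagonal_add]
          funext p
          simp
  have hnonneg : ∀ p : Fin n × Fin m, 0 ≤ μ p.1 + ν p.2 := fun p =>
    add_nonneg (hA.eigenvalues_nonneg p.1) (hB.eigenvalues_nonneg p.2)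
  have hdiagPSD : (Matrix.diagonal (fun p : Fin n × Fin m => μ p.1 + ν p.2)).PosSemidef :=
    Matrix.posSemidef_diagonal_iff.mpr hnonneg
  constructor
  · rw [key]
    exact hdiagPSD.mul_mul_conjTranspose_same (U ⊗ₖ V)
  · have hdU : IsUnit U.det :=
      IsUnit.of_mul_eq_one (a := U.det) Uᴴ.det (by rw [← Matrix.det_mul, hUU, Matrix.det_one])
    have hdV : IsUnit V.det :=
      IsUnit.of_mul_eq_one (a := V.det) Vᴴ.det (by rw [← Matrix.det_mul, hVV, Matrix.det_one])
    have hdUV : IsUnit (U ⊗ₖ V).det := by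
      rw [Matrix.det_kronecker]
      simp only [Fintype.card_fin]
      exact (hdU.pow m).mul (hdV.pow n)
    have hdUVH : IsUnit (U ⊗ₖ V)ᴴ.det := by
      rw [Matrix.det_conjTranspose]
      simpa using hdUV
    rw [key, Matrix.rank_mul_eq_left_of_isUnit_det _ _ hdUVH,
      Matrix.rank_mul_eq_right_of_isUnit_det _ _ hdUV, Matrix.rank_diagonal]
    rw [card_count μ ν (fun i => hA.eigenvalues_nonneg i) (fun k => hB.eigenvalues_nonneg k)]
    rw [hAh.rank_eq_card_non_zero_eigs, hBh.rank_eq_card_non_zero_eigs]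

lemma exists_psd_realization {V : Type} [Fintype V] [DecidableEq V] (G : SimpleGraph V) :
    ∃ A : Matrix V V ℝ, A.PosSemidef ∧ (∀ i j : V, i ≠ j → (A i j ≠ 0 ↔ G.Adj i j)) := by
  classical
  refine ⟨G.lapMatrix ℝ, SimpleGraph.posSemidef_lapMatrix ℝ G, fun i j hij => ?_⟩
  have : G.lapMatrix ℝ i j = - (if G.Adj i j then (1 : ℝ) else 0) := by
    simp [SimpleGraph.lapMatrix, SimpleGraph.degMatrix, Matrix.diagonal_apply_ne _ hij]
  rw [this]
  by_cases h : G.Adj i j <;> simp [h]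

lemma arith_aux (a b c d : ℕ) :
    (a + c) * (b + d) - ((a + c) - a) * ((b + d) - b)
      ≤ (b + d) * a + (a + c) * b - a * b := by
  have e1 : (a + c) * (b + d) = (a*b + a*d + c*b) + c*d := by ring
  have e2 : (a + c) - a = c := by omega
  have e3 : (b + d) - b = d := by omega
  have e4 : (b + d) * a + (a + c) * b = a*b + (a*b + a*d + c*b) := by ring
  rw [e1, e2, e3, e4, Nat.add_sub_cancel, Nat.add_sub_cancel_left]

lemma arith_aux2 (a b n m : ℕ) (ha : a ≤ n) (hb : b ≤ m) :
    n * m - (n - a) * (m - b) ≤ m * a + n * b - a * b := by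
  obtain ⟨c, rfl⟩ := Nat.le.dest ha
  obtain ⟨d, rfl⟩ := Nat.le.dest hb
  exact arith_aux a b c d

/-- `mr₊^ℝ(G □ H) ≤ m·mr₊^ℝ(G) + n·mr₊^ℝ(H) − mr₊^ℝ(G)·mr₊^ℝ(H)`. -/


theorem mrPlusReal_boxProd_upper_bound (n m : ℕ) (hn : 2 ≤ n) (hm : 2 ≤ m)
    (G : SimpleGraph (Fin n)) (H : SimpleGraph (Fin m)) :
    mrPlus ℝ (G □ H) ≤ m * mrPlus ℝ G + n * mrPlus ℝ H - mrPlus ℝ G * mrPlus ℝ H := by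
  classical
  set SG := {r : ℕ | ∃ A : Matrix (Fin n) (Fin n) ℝ, A.PosSemidef ∧
      (∀ i j : Fin n, i ≠ j → (A i j ≠ 0 ↔ G.Adj i j)) ∧ A.rank = r} with hSG
  set SH := {r : ℕ | ∃ B : Matrix (Fin m) (Fin m) ℝ, B.PosSemidef ∧
      (∀ i j : Fin m, i ≠ j → (B i j ≠ 0 ↔ H.Adj i j)) ∧ B.rank = r} with hSH
  have hSGne : SG.Nonempty := by
    obtain ⟨A, h1, h2⟩ := exists_psd_realization G
    exact ⟨A.rank, A, h1, h2, rfl⟩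
  have hSHne : SH.Nonempty := by
    obtain ⟨B, h1, h2⟩ := exists_psd_realization H
    exact ⟨B.rank, B, h1, h2, rfl⟩
  have hGmem : mrPlus ℝ G ∈ SG := Nat.sInf_mem hSGne
  have hHmem : mrPlus ℝ H ∈ SH := Nat.sInf_mem hSHne
  obtain ⟨A, hApsd, hApat, hArk⟩ := hGmem
  obtain ⟨B, hBpsd, hBpat, hBrk⟩ := hHmem
  set C : Matrix (Fin n × Fin m) (Fin n × Fin m) ℝ :=
    A ⊗ₖ (1 : Matrix (Fin m) (Fin m) ℝ) + (1 : Matrix (Fin n) (Fin n) ℝ) ⊗ₖ B with hC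
  obtain ⟨hCpsd, hCrk⟩ := kron_sum_decomp A B hApsd hBpsd
  have hCpat : ∀ p q : Fin n × Fin m, p ≠ q → (C p q ≠ 0 ↔ (G □ H).Adj p q) := by
    intro p q hpq
    have hCe : C p q = A p.1 q.1 * (if p.2 = q.2 then (1:ℝ) else 0)
        + (if p.1 = q.1 then (1:ℝ) else 0) * B p.2 q.2 := by
      simp [hC, Matrix.kroneckerMap_apply, Matrix.one_apply]
    by_cases h1 : p.1 = q.1
    · by_cases h2 : p.2 = q.2
      · exact absurd (Prod.ext h1 h2) hpq
      · have hval : C p q = B p.2 q.2 := by rw [hCe]; simp [h1, h2]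
        rw [hval, SimpleGraph.boxProd_adj]
        constructor
        · intro hB0
          exact Or.inr ⟨(hBpat _ _ h2).mp hB0, h1⟩
        · rintro (⟨_, h⟩ | ⟨h, _⟩)
          · exact absurd h h2
          · exact (hBpat _ _ h2).mpr h
    · by_cases h2 : p.2 = q.2
      · have hval : C p q = A p.1 q.1 := by rw [hCe]; simp [h1, h2]
        rw [hval, SimpleGraph.boxProd_adj]
        constructor
        · intro hA0
          exact Or.inl ⟨(hApat _ _ h1).mp hA0, h2⟩
        · rintro (⟨h, _⟩ | ⟨_, h⟩)
          · exact (hApat _ _ h1).mpr h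
          · exact absurd h h1
      · have hval : C p q = 0 := by rw [hCe]; simp [h1, h2]
        rw [hval, SimpleGraph.boxProd_adj]
        simp [h1, h2]
  have hle : mrPlus ℝ (G □ H) ≤ C.rank := by
    apply Nat.sInf_le
    exact ⟨C, hCpsd, hCpat, rfl⟩
  have haN : mrPlus ℝ G ≤ n := by
    rw [← hArk]; simpa using A.rank_le_card_width
  have hbN : mrPlus ℝ H ≤ m := by
    rw [← hBrk]; simpa using B.rank_le_card_width
  rw [hCrk, hArk, hBrk] at hle
  exact hle.trans (arith_aux2 _ _ _ _ haN hbN)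
end

section
/- For all n, m ≥ 2, n + m − 2 ≤ mr_+^R(K_n □ K_m) ≤ n + m − 1; that is, the real minimum positive semidefinite rank of the Cartesian product K_n □ K_m is either n + m − 2 or n + m − 1. -/
open scoped ComplexOrder

open Matrix Module in
private lemma mrp_lower (n m : ℕ) (hn : 2 ≤ n) (hm : 2 ≤ m)
    (A : Matrix (Fin n × Fin m) (Fin n × Fin m) ℝ) (hA : A.PosSemidef)
    (hpat : ∀ i j, i ≠ j → (A i j ≠ 0 ↔
      ((⊤ : SimpleGraph (Fin n)) □ (⊤ : SimpleGraph (Fin m))).Adj i j)) :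
    n + m - 2 ≤ A.rank := by
  classical
  have hadj : ∀ x y : Fin n × Fin m, x ≠ y →
      ((A x y ≠ 0) ↔ (x.1 = y.1 ∨ x.2 = y.2)) := by
    intro x y hxy
    rw [hpat x y hxy, SimpleGraph.boxProd_adj]
    simp only [SimpleGraph.top_adj]
    constructor
    · rintro (⟨h1, h2⟩ | ⟨h1, h2⟩)
      · exact Or.inr h2
      · exact Or.inl h2
    · rintro (h | h)
      · exact Or.inr ⟨fun h2 => hxy (Prod.ext h h2), h⟩
      · exact Or.inl ⟨fun h1 => hxy (Prod.ext h1 h), h⟩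
  have hzero : ∀ x y : Fin n × Fin m, x.1 ≠ y.1 → x.2 ≠ y.2 → A x y = 0 := by
    intro x y h1 h2
    by_contra h
    rcases (hadj x y (fun he => h1 (congrArg Prod.fst he))).mp h with h' | h'
    exacts [h1 h', h2 h']
  have hnonzero : ∀ x y : Fin n × Fin m, x ≠ y → (x.1 = y.1 ∨ x.2 = y.2) → A x y ≠ 0 :=
    fun x y hne h => (hadj x y hne).mpr h
  obtain ⟨B, hB⟩ : ∃ B : Matrix (Fin n × Fin m) (Fin n × Fin m) ℝ, A = Bᴴ * B := by
    open scoped MatrixOrder in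
    obtain ⟨B, hB⟩ := CStarAlgebra.nonneg_iff_eq_star_mul_self.mp hA.nonneg
    exact ⟨B, hB⟩
  set c : (Fin n × Fin m) → (Fin n × Fin m → ℝ) := fun v s => B s v with hc
  have hdot : ∀ v w, c v ⬝ᵥ c w = A v w := by
    intro v w
    rw [hB]
    simp [Matrix.mul_apply, Matrix.conjTranspose_apply, dotProduct, hc]
  have sum_dot : ∀ {κ : Type} [Fintype κ] (f : κ → (Fin n × Fin m → ℝ)) (x : Fin n × Fin m → ℝ),
      (∑ k, f k) ⬝ᵥ x = ∑ k, f k ⬝ᵥ x := by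
    intro κ _ f x
    simp only [dotProduct, Finset.sum_apply, Finset.sum_mul]
    exact Finset.sum_comm
  have dot_sum : ∀ {κ : Type} [Fintype κ] (x : Fin n × Fin m → ℝ) (f : κ → (Fin n × Fin m → ℝ)),
      x ⬝ᵥ (∑ k, f k) = ∑ k, x ⬝ᵥ f k := by
    intro κ _ x f
    simp only [dotProduct, Finset.sum_apply, Finset.mul_sum]
    exact Finset.sum_comm
  -- the OS family
  have hn1 : ∀ i : Fin (n-1), (i : ℕ) + 1 < n := fun i => by omega
  have hm1 : ∀ j : Fin (m-1), (j : ℕ) + 1 < m := fun j => by omega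
  set vmap : (Fin (n-1) ⊕ Fin (m-1)) → Fin n × Fin m :=
    Sum.elim (fun i => (⟨i + 1, hn1 i⟩, ⟨0, by omega⟩))
             (fun j => (⟨0, by omega⟩, ⟨j + 1, hm1 j⟩)) with hvmap
  set g : (Fin (n-1) ⊕ Fin (m-1)) → (Fin n × Fin m → ℝ) := fun s => c (vmap s) with hg
  have hli : LinearIndependent ℝ g := by
    rw [Fintype.linearIndependent_iff]
    intro z hz
    rw [Fintype.sum_sum_type] at hz
    set U := ∑ i : Fin (n-1), z (Sum.inl i) • g (Sum.inl i) with hU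
    set R := ∑ j : Fin (m-1), z (Sum.inr j) • g (Sum.inr j) with hR
    have hUR : U ⬝ᵥ R = 0 := by
      rw [hU, hR, sum_dot]
      apply Finset.sum_eq_zero
      intro i _
      rw [smul_dotProduct, dot_sum]
      have : ∀ j : Fin (m-1), g (Sum.inl i) ⬝ᵥ (z (Sum.inr j) • g (Sum.inr j)) = 0 := by
        intro j
        rw [dotProduct_smul, hg]
        have h0 : A (vmap (Sum.inl i)) (vmap (Sum.inr j)) = 0 := by
          apply hzero
          · simp [hvmap, Fin.ext_iff]
          · simp [hvmap, Fin.ext_iff]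
        rw [hdot, h0, smul_zero]
      rw [Finset.sum_congr rfl (fun j _ => this j), Finset.sum_const_zero, smul_zero]
    have hU0 : U = 0 := by
      have h1 : U ⬝ᵥ (U + R) = 0 := by rw [hz, dotProduct_zero]
      rw [dotProduct_add, hUR, add_zero] at h1
      exact dotProduct_self_eq_zero.mp h1
    have hR0 : R = 0 := by rwa [hU0, zero_add] at hz
    rintro (i | j)
    · -- witness (i+1, m-1)
      set w : Fin n × Fin m := (⟨i + 1, hn1 i⟩, ⟨m - 1, by omega⟩) with hw
      have h1 : c w ⬝ᵥ U = 0 := by rw [hU0, dotProduct_zero]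
      rw [hU, dot_sum] at h1
      have h2 : ∀ i' : Fin (n-1), i' ≠ i →
          c w ⬝ᵥ (z (Sum.inl i') • g (Sum.inl i')) = 0 := by
        intro i' hi'
        rw [dotProduct_smul, hg, hdot]
        have hi'' : (i' : ℕ) ≠ (i : ℕ) := fun h => hi' (Fin.ext h)
        have h0 : A w (vmap (Sum.inl i')) = 0 := by
          apply hzero <;> simp [hw, hvmap, Fin.ext_iff] <;> omega
        rw [h0, smul_zero]
      rw [Finset.sum_eq_single i (fun i' _ hi' => h2 i' hi')
        (fun h => absurd (Finset.mem_univ i) h)] at h1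
      rw [dotProduct_smul, hg, hdot] at h1
      have hAne : A w (vmap (Sum.inl i)) ≠ 0 := by
        apply hnonzero
        · simp [hw, hvmap, Prod.ext_iff, Fin.ext_iff]; omega
        · left; simp [hw, hvmap]
      have := smul_eq_zero.mp h1
      tauto
    · -- witness (n-1, j+1)
      set w : Fin n × Fin m := (⟨n - 1, by omega⟩, ⟨j + 1, hm1 j⟩) with hw
      have h1 : c w ⬝ᵥ R = 0 := by rw [hR0, dotProduct_zero]
      rw [hR, dot_sum] at h1
      have h2 : ∀ j' : Fin (m-1), j' ≠ j →
          c w ⬝ᵥ (z (Sum.inr j') • g (Sum.inr j')) = 0 := by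
        intro j' hj'
        rw [dotProduct_smul, hg, hdot]
        have hj'' : (j' : ℕ) ≠ (j : ℕ) := fun h => hj' (Fin.ext h)
        have h0 : A w (vmap (Sum.inr j')) = 0 := by
          apply hzero <;> simp [hw, hvmap, Fin.ext_iff] <;> omega
        rw [h0, smul_zero]
      rw [Finset.sum_eq_single j (fun j' _ hj' => h2 j' hj')
        (fun h => absurd (Finset.mem_univ j) h)] at h1
      rw [dotProduct_smul, hg, hdot] at h1
      have hAne : A w (vmap (Sum.inr j)) ≠ 0 := by
        apply hnonzero
        · simp [hw, hvmap, Prod.ext_iff, Fin.ext_iff]; omega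
        · right; simp [hw, hvmap]
      have := smul_eq_zero.mp h1
      tauto
  -- from linear independence to rank
  have hmem : ∀ s, g s ∈ LinearMap.range B.mulVecLin := by
    intro s
    refine ⟨Pi.single (vmap s) 1, ?_⟩
    ext t
    simp [Matrix.mulVecLin_apply, Matrix.mulVec, dotProduct, Pi.single_apply, hg, hc,
      mul_ite, Finset.sum_ite_eq']
  have hspan : Submodule.span ℝ (Set.range g) ≤ LinearMap.range B.mulVecLin :=
    Submodule.span_le.mpr (Set.range_subset_iff.mpr hmem)
  have hle := Submodule.finrank_mono hspan
  rw [finrank_span_eq_card hli] at hle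
  have hrank : A.rank = B.rank := by rw [hB, Matrix.rank_conjTranspose_mul_self]
  have : B.rank = finrank ℝ (LinearMap.range B.mulVecLin) := rfl
  simp only [Fintype.card_sum, Fintype.card_fin] at hle
  omega

open Matrix Module in
private lemma mrp_upper (n m : ℕ) (hn : 2 ≤ n) (hm : 2 ≤ m) :
    ∃ A : Matrix (Fin n × Fin m) (Fin n × Fin m) ℝ, A.PosSemidef ∧
      (∀ i j, i ≠ j → (A i j ≠ 0 ↔
        ((⊤ : SimpleGraph (Fin n)) □ (⊤ : SimpleGraph (Fin m))).Adj i j)) ∧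
      A.rank ≤ n + m - 1 := by
  classical
  set B : Matrix (Fin n ⊕ Fin m) (Fin n × Fin m) ℝ :=
    Matrix.of (fun s x => Sum.elim (fun k => if k = x.1 then (1:ℝ) else 0)
      (fun k => if k = x.2 then (1:ℝ) else 0) s) with hBdef
  refine ⟨Bᴴ * B, Matrix.posSemidef_conjTranspose_mul_self B, ?_, ?_⟩
  · -- the pattern
    have hent : ∀ x y : Fin n × Fin m, (Bᴴ * B) x y =
        (if x.1 = y.1 then (1:ℝ) else 0) + (if x.2 = y.2 then (1:ℝ) else 0) := by
      intro x y
      simp only [Matrix.mul_apply, Matrix.conjTranspose_apply, Fintype.sum_sum_type,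
        hBdef, Matrix.of_apply, Sum.elim_inl, Sum.elim_inr, star_trivial]
      congr 1
      · simp [ite_mul, Finset.sum_ite_eq, eq_comm]
      · simp [ite_mul, Finset.sum_ite_eq, eq_comm]
    intro x y hxy
    rw [hent, SimpleGraph.boxProd_adj]
    simp only [SimpleGraph.top_adj]
    rcases eq_or_ne x.1 y.1 with h1 | h1 <;> rcases eq_or_ne x.2 y.2 with h2 | h2
    · exact absurd (Prod.ext h1 h2) hxy
    · simp [h1, h2]
    · simp [h1, h2]
    · simp [h1, h2]
  · -- the rank bound
    rw [Matrix.rank_conjTranspose_mul_self]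
    set φ : ((Fin n ⊕ Fin m) → ℝ) →ₗ[ℝ] ℝ :=
      { toFun := fun z => (∑ k : Fin n, z (Sum.inl k)) - ∑ k : Fin m, z (Sum.inr k),
        map_add' := by intro a b; simp [Finset.sum_add_distrib]; ring
        map_smul' := by intro r a; simp only [Pi.smul_apply, smul_eq_mul, RingHom.id_apply, mul_sub, Finset.mul_sum] } with hφ
    have hrange : LinearMap.range B.mulVecLin ≤ LinearMap.ker φ := by
      rintro _ ⟨x, rfl⟩
      simp only [LinearMap.mem_ker, hφ, LinearMap.coe_mk, AddHom.coe_mk,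
        Matrix.mulVecLin_apply, Matrix.mulVec, dotProduct, hBdef, Matrix.of_apply,
        Sum.elim_inl, Sum.elim_inr, sub_eq_zero]
      have key1 : (∑ k : Fin n, ∑ p : Fin n × Fin m, (if k = p.1 then (1:ℝ) else 0) * x p)
          = ∑ p : Fin n × Fin m, x p := by
        rw [Finset.sum_comm]
        exact Finset.sum_congr rfl fun p _ => by simp [ite_mul, Finset.sum_ite_eq]
      have key2 : (∑ k : Fin m, ∑ p : Fin n × Fin m, (if k = p.2 then (1:ℝ) else 0) * x p)
          = ∑ p : Fin n × Fin m, x p := by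
        rw [Finset.sum_comm]
        exact Finset.sum_congr rfl fun p _ => by simp [ite_mul, Finset.sum_ite_eq]
      rw [key1, key2]
    have hsurj : LinearMap.range φ = ⊤ := by
      rw [LinearMap.range_eq_top]
      intro r
      refine ⟨Pi.single (Sum.inl ⟨0, by omega⟩) r, ?_⟩
      simp [hφ, Pi.single_apply, Finset.sum_ite_eq']
    have hrn := LinearMap.finrank_range_add_finrank_ker φ
    rw [hsurj] at hrn
    simp only [finrank_top, finrank_self] at hrn
    have hdom : finrank ℝ ((Fin n ⊕ Fin m) → ℝ) = n + m := by
      simp [finrank_pi]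
    rw [hdom] at hrn
    have hker : finrank ℝ (LinearMap.ker φ) = n + m - 1 := by omega
    have hle := Submodule.finrank_mono hrange
    rw [hker] at hle
    exact hle

/-- `n + m − 2 ≤ mr₊^ℝ(K_n □ K_m) ≤ n + m − 1`. -/
theorem mrPlusReal_complete_boxProd_complete (n m : ℕ) (hn : 2 ≤ n) (hm : 2 ≤ m) :
    n + m - 2 ≤ mrPlus ℝ ((⊤ : SimpleGraph (Fin n)) □ (⊤ : SimpleGraph (Fin m))) ∧
    mrPlus ℝ ((⊤ : SimpleGraph (Fin n)) □ (⊤ : SimpleGraph (Fin m))) ≤ n + m - 1 := by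
  obtain ⟨A, hpsd, hpat, hrk⟩ := mrp_upper n m hn hm
  have hmem : A.rank ∈ {r : ℕ | ∃ A : Matrix (Fin n × Fin m) (Fin n × Fin m) ℝ,
      A.PosSemidef ∧ (∀ i j, i ≠ j →
        (A i j ≠ 0 ↔ ((⊤ : SimpleGraph (Fin n)) □ (⊤ : SimpleGraph (Fin m))).Adj i j)) ∧
      A.rank = r} := ⟨A, hpsd, hpat, rfl⟩
  unfold mrPlus
  constructor
  · exact le_csInf ⟨A.rank, hmem⟩
      (by rintro r ⟨A', h1, h2, rfl⟩; exact mrp_lower n m hn hm A' h1 h2)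
  · exact le_trans (Nat.sInf_le hmem) hrk
end

section
/- Let G be a connected graph of order n ≥ 2 satisfying OS(G) = mr_+^R(G) = mr_+^C(G), and let H be a connected graph (of order ≥ 2) satisfying OS(H) = mr_+^R(H) = mr_+^C(H). Then mr_+^R(G ∘ H) = mr_+^C(G ∘ H) = n·mr_+(H) + mr_+(G), where G ∘ H is the corona product of G with H. -/
open scoped ComplexOrder

namespace CoronaAux
open Submodule Set Matrix Module

variable {𝕜 : Type} [RCLike 𝕜]

noncomputable def gram {V W : Type} [Fintype V] [Fintype W] (f : V → EuclideanSpace 𝕜 W) :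
    Matrix V V 𝕜 := Matrix.of fun i j => (inner 𝕜 (f i) (f j) : 𝕜)

lemma gram_apply {V W : Type} [Fintype V] [Fintype W] (f : V → EuclideanSpace 𝕜 W) (i j : V) :
    gram f i j = (inner 𝕜 (f i) (f j) : 𝕜) := rfl

lemma gram_eq {V W : Type} [Fintype V] [Fintype W] (f : V → EuclideanSpace 𝕜 W) :
    gram f = (Matrix.of fun (w : W) (v : V) => f v w)ᴴ * (Matrix.of fun w v => f v w) := by
  ext i j
  simp [gram, Matrix.mul_apply, Matrix.conjTranspose_apply, PiLp.inner_apply, RCLike.inner_apply]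
  exact Finset.sum_congr rfl fun _ _ => mul_comm _ _

lemma gram_posSemidef {V W : Type} [Fintype V] [Fintype W] (f : V → EuclideanSpace 𝕜 W) :
    (gram f).PosSemidef := by
  rw [gram_eq]; exact Matrix.posSemidef_conjTranspose_mul_self _

lemma gram_rank {V W : Type} [Fintype V] [Fintype W] [DecidableEq V] (f : V → EuclideanSpace 𝕜 W) :
    (gram f).rank = Module.finrank 𝕜 (span 𝕜 (range f)) := by
  rw [gram_eq, Matrix.rank_conjTranspose_mul_self, Matrix.rank_eq_finrank_span_cols]
  have hr : range (Matrix.of fun (w : W) (v : V) => f v w).col =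
      (WithLp.linearEquiv 2 𝕜 (W → 𝕜)) '' range f := by
    ext x; simp [Matrix.col, Matrix.transpose]; rfl
  rw [hr, ← LinearEquiv.coe_coe, Submodule.span_image, LinearEquiv.finrank_map_eq]


open scoped MatrixOrder in
lemma exists_gram {V : Type} [Fintype V] [DecidableEq V] {A : Matrix V V 𝕜} (hA : A.PosSemidef) :
    ∃ f : V → EuclideanSpace 𝕜 V, A = gram f := by
  obtain ⟨B, rfl⟩ := CStarAlgebra.nonneg_iff_eq_star_mul_self.mp hA.nonneg
  refine ⟨fun v => WithLp.toLp 2 (fun w => B w v), ?_⟩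
  ext i j
  simp [gram, Matrix.mul_apply, Matrix.star_eq_conjTranspose, Matrix.conjTranspose_apply, PiLp.inner_apply, RCLike.inner_apply]
  exact Finset.sum_congr rfl fun _ _ => mul_comm _ _

-- membership in orthogonal of a span
lemma mem_orthogonal_span' {E : Type} [NormedAddCommGroup E] [InnerProductSpace 𝕜 E]
    (S : Set E) {a : E} (h : ∀ s ∈ S, (inner 𝕜 a s : 𝕜) = 0) : a ∈ (span 𝕜 S)ᗮ := by
  rw [Submodule.mem_orthogonal']
  intro u hu
  induction hu using Submodule.span_induction with
  | mem x hx => exact h x hx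
  | zero => exact inner_zero_right a
  | add x y _ _ hx hy => rw [inner_add_right, hx, hy, add_zero]
  | smul c x _ hx => rw [inner_smul_right, hx, mul_zero]


section FinrankSup
variable {K : Type} [Field K] {E : Type} [AddCommGroup E] [Module K E] [FiniteDimensional K E]

lemma finrank_sup_le' (p q : Submodule K E) :
    finrank K ↥(p ⊔ q) ≤ finrank K p + finrank K q := by
  have := Submodule.finrank_sup_add_finrank_inf_eq p q
  omega

lemma finrank_finset_sup_le {ι : Type} (s : Finset ι) (W : ι → Submodule K E) :
    finrank K ↥(s.sup W) ≤ ∑ i ∈ s, finrank K ↥(W i) := by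
  classical
  induction s using Finset.induction_on with
  | empty => simp
  | @insert a s ha ih =>

    rw [Finset.sup_insert, Finset.sum_insert ha]
    exact (finrank_sup_le' _ _).trans (by omega)

lemma finrank_iSup_le' {ι : Type} [Fintype ι] (W : ι → Submodule K E) :
    finrank K ↥(⨆ i, W i) ≤ ∑ i, finrank K ↥(W i) := by
  rw [← Finset.sup_univ_eq_iSup]
  exact finrank_finset_sup_le _ _
end FinrankSup

section OrthSup
variable {E : Type} [NormedAddCommGroup E] [InnerProductSpace 𝕜 E] [FiniteDimensional 𝕜 E]

lemma finrank_sup_eq_of_orth {p q : Submodule 𝕜 E} (h : p ≤ qᗮ) :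
    finrank 𝕜 ↥(p ⊔ q) = finrank 𝕜 p + finrank 𝕜 q := by
  have hd : p ⊓ q = ⊥ := by
    rw [eq_bot_iff]
    intro x hx
    have h1 : x ∈ qᗮ := h hx.1
    have : (inner 𝕜 x x : 𝕜) = 0 := Submodule.mem_orthogonal' _ _ |>.mp h1 x hx.2
    simpa [inner_self_eq_zero] using this
  have := Submodule.finrank_sup_add_finrank_inf_eq p q
  rw [hd] at this
  simpa using this

lemma sum_finrank_le_finrank_iSup_of_orth {ι : Type} [Fintype ι] [DecidableEq ι]
    (W : ι → Submodule 𝕜 E) (h : ∀ i j, i ≠ j → W i ≤ (W j)ᗮ) :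
    ∑ i, finrank 𝕜 ↥(W i) ≤ finrank 𝕜 ↥(⨆ i, W i) := by
  rw [← Finset.sup_univ_eq_iSup]
  have key : ∀ s : Finset ι, ∑ i ∈ s, finrank 𝕜 ↥(W i) ≤ finrank 𝕜 ↥(s.sup W) := by
    intro s
    induction s using Finset.induction_on with
    | empty => simp
    | @insert a s ha ih =>

      rw [Finset.sup_insert, Finset.sum_insert ha]
      have horth : s.sup W ≤ (W a)ᗮ := by
        apply Finset.sup_le
        intro i hi
        exact h i a (fun hia => ha (hia ▸ hi))
      have : (W a) ≤ (s.sup W)ᗮ := by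
        intro x hx
        rw [Submodule.mem_orthogonal]
        intro u hu
        have := horth hu
        exact Submodule.mem_orthogonal' _ _ |>.mp this x hx
      rw [finrank_sup_eq_of_orth this]
      omega
  exact key Finset.univ
end OrthSup

section Avoid
lemma exists_forall_ne_zero {M : Type} [AddCommGroup M] [Module 𝕜 M] {ι : Type} [Fintype ι]
    [DecidableEq ι] (φ : ι → M →ₗ[𝕜] 𝕜) (h : ∀ p, ∃ y, φ p y ≠ 0) :
    ∃ x : M, ∀ p, φ p x ≠ 0 := by
  suffices h' : ∀ s : Finset ι, ∃ x, ∀ p ∈ s, φ p x ≠ 0 by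
    obtain ⟨x, hx⟩ := h' Finset.univ
    exact ⟨x, fun p => hx p (Finset.mem_univ p)⟩
  intro s
  induction s using Finset.induction_on with
  | empty => exact ⟨0, by simp⟩
  | @insert a s ha ih =>

    obtain ⟨x, hx⟩ := ih
    obtain ⟨y, hy⟩ := h a
    have : Infinite 𝕜 := Infinite.of_injective (Nat.cast : ℕ → 𝕜) (Nat.cast_injective)
    obtain ⟨t, ht⟩ := Infinite.exists_notMem_finset
      ((insert a s).image fun p => -(φ p y) / (φ p x))
    refine ⟨y + t • x, ?_⟩
    intro p hp hz
    have hexp : φ p y + t * φ p x = 0 := by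
      simpa [map_add, _root_.map_smul, smul_eq_mul] using hz
    by_cases hpx : φ p x = 0
    · rcases Finset.mem_insert.mp hp with rfl | hps
      · exact hy (by rw [hpx, mul_zero, add_zero] at hexp; exact hexp)
      · exact hx p hps hpx
    · apply ht
      rw [Finset.mem_image]
      refine ⟨p, hp, ?_⟩
      field_simp
      linear_combination -hexp
end Avoid


section basics
variable {V : Type} [Fintype V] [DecidableEq V] (G : SimpleGraph V)

omit [Fintype V] [DecidableEq V] in
lemma sym2_eq {i j : V} (hij : i ≠ j) (e : Sym2 V) (hi : i ∈ e) (hj : j ∈ e) :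
    e = s(i, j) := by
  induction e using Sym2.ind with
  | _ a b =>
    rw [Sym2.mem_iff] at hi hj
    rcases hi with rfl | rfl <;> rcases hj with rfl | rfl
    · exact absurd rfl hij
    · rfl
    · exact Sym2.eq_swap
    · exact absurd rfl hij

lemma mrPlus_witness : ∃ A : Matrix V V 𝕜, A.PosSemidef ∧
    (∀ i j : V, i ≠ j → (A i j ≠ 0 ↔ G.Adj i j)) := by
  classical
  set f : V → EuclideanSpace 𝕜 (V ⊕ Sym2 V) := fun v =>
    WithLp.toLp 2 (fun c => match c with
      | Sum.inl u => if u = v then 1 else 0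
      | Sum.inr e => if v ∈ e ∧ e ∈ G.edgeSet then 1 else 0 : (V ⊕ Sym2 V) → 𝕜)
  refine ⟨gram f, gram_posSemidef f, fun i j hij => ?_⟩
  have hkey : gram f i j = if G.Adj i j then 1 else 0 := by
    show (inner 𝕜 (f i) (f j) : 𝕜) = _
    rw [PiLp.inner_apply, Fintype.sum_sum_type]
    have h1 : ∀ u : V, (inner 𝕜 ((f i) (Sum.inl u)) ((f j) (Sum.inl u)) : 𝕜) = 0 := by
      intro u
      simp only [f, RCLike.inner_apply]
      rcases eq_or_ne u i with rfl | hui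
      · simp [hij, Ne.symm hij]
      · simp [hui]
    have h2 : ∀ e : Sym2 V, (inner 𝕜 ((f i) (Sum.inr e)) ((f j) (Sum.inr e)) : 𝕜)
        = if e = s(i, j) ∧ G.Adj i j then 1 else 0 := by
      intro e
      by_cases hA : i ∈ e ∧ e ∈ G.edgeSet
      · by_cases hB : j ∈ e ∧ e ∈ G.edgeSet
        · have heq := sym2_eq hij e hA.1 hB.1
          have hadj : G.Adj i j := (G.mem_edgeSet).mp (heq ▸ hA.2)
          simp [f, RCLike.inner_apply, hA, hB, heq, hadj]
        · have hne : ¬(e = s(i, j) ∧ G.Adj i j) := by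
            rintro ⟨rfl, hadj⟩
            exact hB ⟨Sym2.mem_mk_right i j, (G.mem_edgeSet).mpr hadj⟩
          have hj' : j ∉ e := fun hj => hB ⟨hj, hA.2⟩
          simp [f, RCLike.inner_apply, hA, hj', hne]
      · have hne : ¬(e = s(i, j) ∧ G.Adj i j) := by
          rintro ⟨rfl, hadj⟩
          exact hA ⟨Sym2.mem_mk_left i j, (G.mem_edgeSet).mpr hadj⟩
        simp [f, RCLike.inner_apply, hA, hne]
    simp only [h1, h2, Finset.sum_const_zero, zero_add]
    by_cases hadj : G.Adj i j
    · simp [hadj]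
    · simp [hadj]
  rw [hkey]
  by_cases h : G.Adj i j <;> simp [h]

lemma mrPlus_le {A : Matrix V V 𝕜} (h1 : A.PosSemidef)
    (h2 : ∀ i j : V, i ≠ j → (A i j ≠ 0 ↔ G.Adj i j)) : mrPlus 𝕜 G ≤ A.rank :=
  Nat.sInf_le ⟨A, h1, h2, rfl⟩

lemma exists_optimal : ∃ A : Matrix V V 𝕜, A.PosSemidef ∧
    (∀ i j : V, i ≠ j → (A i j ≠ 0 ↔ G.Adj i j)) ∧ A.rank = mrPlus 𝕜 G := by
  obtain ⟨A, h1, h2⟩ := mrPlus_witness (𝕜 := 𝕜) G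
  exact Nat.sInf_mem (s := {r : ℕ | ∃ A : Matrix V V 𝕜, A.PosSemidef ∧
    (∀ i j : V, i ≠ j → (A i j ≠ 0 ↔ G.Adj i j)) ∧ A.rank = r}) ⟨A.rank, A, h1, h2, rfl⟩
end basics


lemma exists_inner_ne_zero {E : Type} [NormedAddCommGroup E] [InnerProductSpace 𝕜 E]
    {ι : Type} [Fintype ι] [DecidableEq ι] (S : Submodule 𝕜 E) (h : ι → E)
    (hmem : ∀ p, h p ∈ S) (hne : ∀ p, h p ≠ 0) :
    ∃ x ∈ S, ∀ p, (inner 𝕜 x (h p) : 𝕜) ≠ 0 := by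
  obtain ⟨x, hx⟩ := exists_forall_ne_zero (M := ↥S)
    (φ := fun p => (innerSL 𝕜 (h p)).toLinearMap.comp S.subtype)
    (fun p => ⟨⟨h p, hmem p⟩, by
      simpa [inner_self_eq_zero] using hne p⟩)
  refine ⟨(x : E), x.2, fun p => ?_⟩
  intro hz
  apply hx p
  simpa [inner_eq_zero_symm.mp hz] using (inner_eq_zero_symm.mp hz)

-- connected graph with ≥ 2 vertices: every vertex has a neighbor
lemma exists_adj_of_connected {V : Type} [Fintype V] {H : SimpleGraph V}
    (hc : H.Connected) (hcard : 2 ≤ Fintype.card V) (p : V) : ∃ q, H.Adj p q := by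
  obtain ⟨q, hq⟩ := Fintype.exists_ne_of_one_lt_card (by omega) p
  obtain ⟨w⟩ := hc.preconnected p q
  cases w with
  | nil => exact absurd rfl hq.symm
  | cons h _ => exact ⟨_, h⟩


lemma mrPlus_corona_ge {n m : ℕ} (G : SimpleGraph (Fin n)) (H : SimpleGraph (Fin m)) :
    n * mrPlus 𝕜 H + mrPlus 𝕜 G ≤ mrPlus 𝕜 (corona G H) := by
  classical
  obtain ⟨A, hA, hpat, hrank⟩ := exists_optimal (𝕜 := 𝕜) (corona G H)
  obtain ⟨f, rfl⟩ := exists_gram hA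
  -- zero entries from non-adjacency
  have hzero : ∀ u v : Fin n ⊕ Fin n × Fin m, u ≠ v → ¬ (corona G H).Adj u v →
      (inner 𝕜 (f u) (f v) : 𝕜) = 0 := by
    intro u v huv hadj
    by_contra hne
    exact hadj ((hpat u v huv).mp hne)
  set W : Fin n → Submodule 𝕜 (EuclideanSpace 𝕜 (Fin n ⊕ Fin n × Fin m)) :=
    fun i => span 𝕜 (range fun p : Fin m => f (Sum.inr (i, p))) with hW
  -- copies are pairwise orthogonal
  have hWorth : ∀ i j, i ≠ j → W i ≤ (W j)ᗮ := by
    intro i j hij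
    rw [hW]
    apply span_le.mpr
    rintro _ ⟨p, rfl⟩
    apply mem_orthogonal_span'
    rintro _ ⟨q, rfl⟩
    apply hzero
    · simp [hij]
    · show ¬(i = j ∧ _)
      tauto
  -- G-vertices orthogonal to other copies
  have hforth : ∀ i j, i ≠ j → f (Sum.inl i) ∈ (W j)ᗮ := by
    intro i j hij
    apply mem_orthogonal_span'
    rintro _ ⟨q, rfl⟩
    apply hzero
    · simp
    · show ¬(i = j)
      exact hij
  -- each copy has dimension ≥ mrPlus 𝕜 H
  have hWrank : ∀ i, mrPlus 𝕜 H ≤ finrank 𝕜 ↥(W i) := by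
    intro i
    have hle := mrPlus_le (𝕜 := 𝕜) H
      (A := gram fun p : Fin m => f (Sum.inr (i, p))) (gram_posSemidef _) ?_
    · rwa [gram_rank] at hle
    · intro p q hpq
      rw [gram_apply, ← gram_apply f, hpat]
      · show (i = i ∧ H.Adj p q) ↔ H.Adj p q
        simp
      · simp [hpq]
  -- the projected G-vectors
  have hproj : ∀ i : Fin n, HasOrthogonalProjection (W i) := fun i => inferInstance
  set g : Fin n → EuclideanSpace 𝕜 (Fin n ⊕ Fin n × Fin m) := fun i =>
    f (Sum.inl i) - (orthogonalProjection (W i) (f (Sum.inl i)) : EuclideanSpace 𝕜 (Fin n ⊕ Fin n × Fin m)) with hg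
  have hginner : ∀ i j, i ≠ j →
      (inner 𝕜 (g i) (g j) : 𝕜) = inner 𝕜 (f (Sum.inl i)) (f (Sum.inl j)) := by
    intro i j hij
    rw [hg]
    simp only [inner_sub_left, inner_sub_right]
    have h1 : (inner 𝕜 (f (Sum.inl i)) ((orthogonalProjection (W j) (f (Sum.inl j))) : EuclideanSpace 𝕜 (Fin n ⊕ Fin n × Fin m)) : 𝕜) = 0 :=
      (Submodule.mem_orthogonal' _ _).mp (hforth i j hij) _ (coe_mem _)
    have h2 : (inner 𝕜 ((orthogonalProjection (W i) (f (Sum.inl i))) : EuclideanSpace 𝕜 (Fin n ⊕ Fin n × Fin m)) (f (Sum.inl j)) : 𝕜) = 0 :=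
      (Submodule.mem_orthogonal _ _).mp (hforth j i hij.symm) _ (coe_mem _)
    have h3 : (inner 𝕜 ((orthogonalProjection (W i) (f (Sum.inl i))) : EuclideanSpace 𝕜 (Fin n ⊕ Fin n × Fin m))
        ((orthogonalProjection (W j) (f (Sum.inl j))) : EuclideanSpace 𝕜 (Fin n ⊕ Fin n × Fin m)) : 𝕜) = 0 :=
      (Submodule.mem_orthogonal' _ _).mp (hWorth i j hij (coe_mem _)) _ (coe_mem _)
    rw [h1, h2, h3]
    ring
  -- gram of g fits G
  have hGle : mrPlus 𝕜 G ≤ finrank 𝕜 (span 𝕜 (range g)) := by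
    have hle := mrPlus_le (𝕜 := 𝕜) G (A := gram g) (gram_posSemidef _) ?_
    · rwa [gram_rank] at hle
    · intro i j hij
      rw [gram_apply, hginner i j hij, ← gram_apply f, hpat]
      · exact Iff.rfl
      · simp [hij]
  -- span of g is orthogonal to all copies
  have hgorth : span 𝕜 (range g) ≤ (⨆ i, W i)ᗮ := by
    apply span_le.mpr
    rintro _ ⟨i, rfl⟩
    rw [SetLike.mem_coe, ← Submodule.iInf_orthogonal, Submodule.mem_iInf]
    intro j
    rcases eq_or_ne j i with rfl | hji
    · rw [hg]
      exact sub_starProjection_mem_orthogonal _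
    · rw [hg]
      exact sub_mem (hforth i j hji.symm) ((hWorth i j hji.symm) (coe_mem _))
  -- everything lives inside the span of all the Gram vectors
  have hT : span 𝕜 (range g) ⊔ (⨆ i, W i) ≤ span 𝕜 (range f) := by
    apply sup_le
    · apply span_le.mpr
      rintro _ ⟨i, rfl⟩
      rw [hg]
      refine sub_mem (subset_span (mem_range_self _)) ?_
      have hWT : W i ≤ span 𝕜 (range f) := by
        rw [hW]
        apply span_mono
        rintro _ ⟨p, rfl⟩
        exact mem_range_self _
      exact hWT (coe_mem _)
    · apply iSup_le
      intro i
      rw [hW]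
      apply span_mono
      rintro _ ⟨p, rfl⟩
      exact mem_range_self _
  -- dimension count
  have hdim : finrank 𝕜 ↥(span 𝕜 (range g) ⊔ ⨆ i, W i)
      = finrank 𝕜 ↥(span 𝕜 (range g)) + finrank 𝕜 ↥(⨆ i, W i) :=
    finrank_sup_eq_of_orth hgorth
  have hWsum : ∑ i, finrank 𝕜 ↥(W i) ≤ finrank 𝕜 ↥(⨆ i, W i) :=
    sum_finrank_le_finrank_iSup_of_orth W hWorth
  have hnm : n * mrPlus 𝕜 H ≤ ∑ i, finrank 𝕜 ↥(W i) := by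
    calc n * mrPlus 𝕜 H = ∑ _i : Fin n, mrPlus 𝕜 H := by
          simp [Finset.sum_const, mul_comm]
      _ ≤ ∑ i, finrank 𝕜 ↥(W i) := Finset.sum_le_sum fun i _ => hWrank i
  have hTle : finrank 𝕜 ↥(span 𝕜 (range g) ⊔ ⨆ i, W i) ≤ mrPlus 𝕜 (corona G H) := by
    rw [← hrank, gram_rank]
    exact Submodule.finrank_mono hT
  omega


noncomputable def padL {n m : ℕ} :
    EuclideanSpace 𝕜 (Fin n) →ₗ[𝕜] EuclideanSpace 𝕜 (Fin n ⊕ Fin n × Fin m) where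
  toFun v := WithLp.toLp 2 (Sum.elim (fun k => v k) (fun _ => 0))
  map_add' u v := by ext c; cases c <;> simp
  map_smul' a u := by ext c; cases c <;> simp

noncomputable def padR {n m : ℕ} (i : Fin n) :
    EuclideanSpace 𝕜 (Fin m) →ₗ[𝕜] EuclideanSpace 𝕜 (Fin n ⊕ Fin n × Fin m) where
  toFun v := WithLp.toLp 2 (Sum.elim (fun _ => 0) (fun (jq : Fin n × Fin m) => if jq.1 = i then v jq.2 else 0))
  map_add' u v := by ext c; cases c <;> simp [ite_add_ite]
  map_smul' a u := by ext c; cases c <;> simp [mul_ite]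

lemma inner_padL_padL {n m : ℕ} (a b : EuclideanSpace 𝕜 (Fin n)) :
    (inner 𝕜 (padL (m := m) a) (padL b) : 𝕜) = inner 𝕜 a b := by
  simp [padL, PiLp.inner_apply, Fintype.sum_sum_type, Fintype.sum_prod_type,
    LinearMap.coe_mk, AddHom.coe_mk]

lemma inner_padL_padR {n m : ℕ} (a : EuclideanSpace 𝕜 (Fin n)) (i : Fin n)
    (v : EuclideanSpace 𝕜 (Fin m)) :
    (inner 𝕜 (padL a) (padR i v) : 𝕜) = 0 ∧ (inner 𝕜 (padR i v) (padL a) : 𝕜) = 0 := by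
  constructor <;>
    simp [padL, padR, PiLp.inner_apply, Fintype.sum_sum_type, Fintype.sum_prod_type,
      apply_ite, mul_ite, ite_mul]

lemma inner_padR_padR {n m : ℕ} (i j : Fin n) (u v : EuclideanSpace 𝕜 (Fin m)) :
    (inner 𝕜 (padR (n := n) i u) (padR j v) : 𝕜) = if i = j then (inner 𝕜 u v : 𝕜) else 0 := by
  simp only [padR, PiLp.inner_apply, Fintype.sum_sum_type, Fintype.sum_prod_type,
    LinearMap.coe_mk, AddHom.coe_mk, Sum.elim_inl, Sum.elim_inr]
  rw [Finset.sum_comm]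
  by_cases hij : i = j
  · subst hij
    simp [apply_ite, ite_mul, mul_ite, RCLike.inner_apply, Finset.sum_ite_eq']
  · simp [apply_ite, ite_mul, mul_ite, Finset.sum_ite_eq', hij, Ne.symm hij]

lemma mrPlus_corona_le {n m : ℕ} (hm : 2 ≤ m) (G : SimpleGraph (Fin n))
    (H : SimpleGraph (Fin m)) (hHc : H.Connected) :
    mrPlus 𝕜 (corona G H) ≤ n * mrPlus 𝕜 H + mrPlus 𝕜 G := by
  classical
  obtain ⟨AG, hAG, hpatG, hrankG⟩ := exists_optimal (𝕜 := 𝕜) G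
  obtain ⟨fG, rfl⟩ := exists_gram hAG
  obtain ⟨AH, hAH, hpatH, hrankH⟩ := exists_optimal (𝕜 := 𝕜) H
  obtain ⟨fH, rfl⟩ := exists_gram hAH
  -- each fH p is nonzero
  have hHnz : ∀ p, fH p ≠ 0 := by
    intro p hp0
    obtain ⟨q, hq⟩ := exists_adj_of_connected hHc (by simpa using hm) p
    have hne : (gram fH) p q ≠ 0 := (hpatH p q hq.ne).mpr hq
    apply hne
    rw [gram_apply, hp0]
    exact inner_zero_left _
  -- choose x in the span of the fH p with nonzero inner 𝕜 products with all of them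
  obtain ⟨x, hxmem, hx⟩ := exists_inner_ne_zero (span 𝕜 (range fH)) fH
    (fun p => subset_span (mem_range_self p)) hHnz
  -- the frame for the corona
  set F : (Fin n ⊕ Fin n × Fin m) → EuclideanSpace 𝕜 (Fin n ⊕ Fin n × Fin m) := fun u =>
    match u with
    | Sum.inl i => padL (fG i) + padR i x
    | Sum.inr (i, p) => padR i (fH p)
    with hF
  -- inner 𝕜 product values
  have hFll : ∀ i j : Fin n, (inner 𝕜 (F (Sum.inl i)) (F (Sum.inl j)) : 𝕜)
      = inner 𝕜 (fG i) (fG j) + if i = j then (inner 𝕜 x x : 𝕜) else 0 := by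
    intro i j
    rw [hF]
    simp only [inner_add_left, inner_add_right, inner_padL_padL, inner_padR_padR,
      (inner_padL_padR (fG i) j x).1, (inner_padL_padR (fG j) i x).2]
    ring
  have hFlr : ∀ (i : Fin n) (j : Fin n) (q : Fin m),
      (inner 𝕜 (F (Sum.inl i)) (F (Sum.inr (j, q))) : 𝕜)
      = if i = j then (inner 𝕜 x (fH q) : 𝕜) else 0 := by
    intro i j q
    rw [hF]
    simp only [inner_add_left, inner_padR_padR, (inner_padL_padR (fG i) j (fH q)).1]
    ring
  have hFrr : ∀ (i j : Fin n) (p q : Fin m),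
      (inner 𝕜 (F (Sum.inr (i, p))) (F (Sum.inr (j, q))) : 𝕜)
      = if i = j then (inner 𝕜 (fH p) (fH q) : 𝕜) else 0 := by
    intro i j p q
    rw [hF]
    exact inner_padR_padR i j (fH p) (fH q)
  -- the gram matrix of F fits the corona
  have hpat : ∀ u v : Fin n ⊕ Fin n × Fin m, u ≠ v →
      ((gram F) u v ≠ 0 ↔ (corona G H).Adj u v) := by
    rintro (i | ⟨i, p⟩) (j | ⟨j, q⟩) huv
    · have hij : i ≠ j := fun h => huv (by rw [h])
      rw [gram_apply, hFll, if_neg hij, add_zero]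
      have := hpatG i j hij
      rw [gram_apply] at this
      exact this.trans (by rfl)
    · rw [gram_apply, hFlr]
      show _ ↔ i = j
      rcases eq_or_ne i j with rfl | hij
      · simpa using hx q
      · simp [hij]
    · rw [gram_apply]
      have hFrl : (inner 𝕜 (F (Sum.inr (i, p))) (F (Sum.inl j)) : 𝕜)
          = if i = j then (inner 𝕜 (fH p) x : 𝕜) else 0 := by
        rw [hF]
        simp only [inner_add_right, inner_padR_padR, (inner_padL_padR (fG j) i (fH p)).2]
        exact zero_add _
      rw [hFrl]
      show _ ↔ j = i
      rcases eq_or_ne i j with rfl | hij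
      · simp only [if_pos rfl]
        constructor
        · intro _; trivial
        · intro _ h0
          exact hx p (inner_eq_zero_symm.mp h0)
      · simp [hij, Ne.symm hij]
    · rw [gram_apply, hFrr]
      show _ ↔ i = j ∧ H.Adj p q
      rcases eq_or_ne i j with rfl | hij
      · have hpq : p ≠ q := fun h => huv (by rw [h])
        rw [if_pos rfl]
        have := hpatH p q hpq
        rw [gram_apply] at this
        simpa using this
      · simp [hij]
  -- rank bound via span
  have hrank : (gram F).rank ≤ n * mrPlus 𝕜 H + mrPlus 𝕜 G := by
    rw [gram_rank]
    set bigU : Submodule 𝕜 (EuclideanSpace 𝕜 (Fin n ⊕ Fin n × Fin m)) :=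
      (span 𝕜 (range fG)).map (padL (m := m)) ⊔ ⨆ i, (span 𝕜 (range fH)).map (padR i)
      with hbigU
    have hsub : span 𝕜 (range F) ≤ bigU := by
      apply span_le.mpr
      rintro _ ⟨u, rfl⟩
      rcases u with i | ⟨i, p⟩
      · rw [hF]
        apply add_mem
        · exact Submodule.mem_sup_left
            (Submodule.mem_map_of_mem (subset_span (mem_range_self i)))
        · exact Submodule.mem_sup_right
            (Submodule.mem_iSup_of_mem i (Submodule.mem_map_of_mem hxmem))
      · rw [hF]
        exact Submodule.mem_sup_right
          (Submodule.mem_iSup_of_mem i (Submodule.mem_map_of_mem (subset_span (mem_range_self p))))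
    calc finrank 𝕜 ↥(span 𝕜 (range F)) ≤ finrank 𝕜 ↥bigU := Submodule.finrank_mono hsub
      _ ≤ finrank 𝕜 ↥((span 𝕜 (range fG)).map (padL (m := m)))
          + finrank 𝕜 ↥(⨆ i, (span 𝕜 (range fH)).map (padR i)) := finrank_sup_le' _ _
      _ ≤ mrPlus 𝕜 G + ∑ _i : Fin n, mrPlus 𝕜 H := by
          apply Nat.add_le_add
          · calc finrank 𝕜 ↥((span 𝕜 (range fG)).map (padL (m := m)))
                ≤ finrank 𝕜 ↥(span 𝕜 (range fG)) := Submodule.finrank_map_le _ _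
              _ = mrPlus 𝕜 G := by rw [← gram_rank, hrankG]
          · calc finrank 𝕜 ↥(⨆ i, (span 𝕜 (range fH)).map (padR i))
                ≤ ∑ i : Fin n, finrank 𝕜 ↥((span 𝕜 (range fH)).map (padR i)) :=
                  finrank_iSup_le' _
              _ ≤ ∑ _i : Fin n, mrPlus 𝕜 H := by
                  apply Finset.sum_le_sum
                  intro i _
                  calc finrank 𝕜 ↥((span 𝕜 (range fH)).map (padR i))
                      ≤ finrank 𝕜 ↥(span 𝕜 (range fH)) := Submodule.finrank_map_le _ _
                    _ = mrPlus 𝕜 H := by rw [← gram_rank, hrankH]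
      _ = n * mrPlus 𝕜 H + mrPlus 𝕜 G := by simp [mul_comm, Nat.add_comm]
  exact (mrPlus_le (corona G H) (gram_posSemidef F) hpat).trans hrank


end CoronaAux

/-- if `OS(G) = mr₊(G)` and `OS(H) = mr₊(H)` for connected `G`, `H`, then
`mr₊(G ∘ H) = n·mr₊(H) + mr₊(G)`. -/
theorem mrPlus_corona (n m : ℕ) (hn : 2 ≤ n) (hm : 2 ≤ m)
    (G : SimpleGraph (Fin n)) (H : SimpleGraph (Fin m))
    (hGc : G.Connected) (hHc : H.Connected)
    (hG1 : OSNumber G = mrPlus ℝ G) (hG2 : mrPlus ℝ G = mrPlus ℂ G)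
    (hH1 : OSNumber H = mrPlus ℝ H) (hH2 : mrPlus ℝ H = mrPlus ℂ H) :
    mrPlus ℝ (corona G H) = n * mrPlus ℝ H + mrPlus ℝ G ∧
    mrPlus ℂ (corona G H) = n * mrPlus ℝ H + mrPlus ℝ G := by
  have hgeR := CoronaAux.mrPlus_corona_ge (𝕜 := ℝ) G H
  have hleR := CoronaAux.mrPlus_corona_le (𝕜 := ℝ) hm G H hHc
  have hgeC := CoronaAux.mrPlus_corona_ge (𝕜 := ℂ) G H
  have hleC := CoronaAux.mrPlus_corona_le (𝕜 := ℂ) hm G H hHc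
  have h1 : n * mrPlus ℂ H + mrPlus ℂ G = n * mrPlus ℝ H + mrPlus ℝ G := by
    rw [hH2, hG2]
  constructor
  · omega
  · omega
end
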